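/- arXiv:1205.2094 — 6 statements merged into one kernel-verified Lean document; each statement's English description precedes it below -/
import Mathlib

section
/- Let ‖·‖ be a norm on ℝⁿ, let S ⊆ ℝⁿ, let D ≥ 1, and suppose there exists an ultrametric ρ on S with ‖x−y‖ ≤ ρ(x,y) ≤ D·‖x−y‖ for all x,y ∈ S. Let r > 0 and let C be a path-connected subset of S + B°(r), where B°(r) = {x : ‖x‖ < r} and + denotes Minkowski sum. Then diam(C) ≤ 2(D+1)r. -/
open Metric Pointwise

/-- Claim 2 of the paper: if `S ⊆ ℝⁿ` (a finite-dimensional real normed space) admits an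
ultrametric `ρ` with `‖x-y‖ ≤ ρ(x,y) ≤ D‖x-y‖` on `S`, and `C` is a path-connected subset
of the Minkowski sum `S + B°(r)`, then `diam C ≤ 2(D+1)r`. -/
theorem stmt_2 {E : Type*} [NormedAddCommGroup E] [NormedSpace ℝ E] [FiniteDimensional ℝ E]
    (S : Set E) (D : ℝ) (hD : 1 ≤ D) (ρ : E → E → ℝ)
    (hsymm : ∀ x ∈ S, ∀ y ∈ S, ρ x y = ρ y x)
    (hultra : ∀ x ∈ S, ∀ y ∈ S, ∀ z ∈ S, ρ x y ≤ max (ρ x z) (ρ z y))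
    (hlow : ∀ x ∈ S, ∀ y ∈ S, ‖x - y‖ ≤ ρ x y)
    (hup : ∀ x ∈ S, ∀ y ∈ S, ρ x y ≤ D * ‖x - y‖)
    (r : ℝ) (hr : 0 < r) (C : Set E) (hCsub : C ⊆ S + ball (0 : E) r)
    (hCpath : IsPathConnected C) :
    Metric.diam C ≤ 2 * (D + 1) * r := by
  have hD0 : (0:ℝ) < D := lt_of_lt_of_le one_pos hD
  apply Metric.diam_le_of_forall_dist_le (by positivity)
  intro x hx y hy
  obtain ⟨sx, hsxS, bx, hbx, hxeq⟩ := hCsub hx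
  obtain ⟨sy, hsyS, by', hby, hyeq⟩ := hCsub hy
  rw [mem_ball_zero_iff] at hbx hby
  have key : ρ sx sy < 2 * D * r := by
    by_contra hco
    push_neg at hco
    set T : Set E := {s | s ∈ S ∧ ρ sx s < 2 * D * r} with hT
    set T' : Set E := {s | s ∈ S ∧ 2 * D * r ≤ ρ sx s} with hT'
    have hu : IsOpen (T + ball (0:E) r) := isOpen_ball.add_left
    have hv : IsOpen (T' + ball (0:E) r) := isOpen_ball.add_left
    have hsub : C ⊆ (T + ball (0:E) r) ∪ (T' + ball (0:E) r) := by
      intro c hc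
      obtain ⟨s, hsS, b, hb, hceq⟩ := hCsub hc
      rcases lt_or_ge (ρ sx s) (2 * D * r) with h | h
      · exact Or.inl ⟨s, ⟨hsS, h⟩, b, hb, hceq⟩
      · exact Or.inr ⟨s, ⟨hsS, h⟩, b, hb, hceq⟩
    have hxu : x ∈ C ∩ (T + ball (0:E) r) := by
      refine ⟨hx, sx, ⟨hsxS, ?_⟩, bx, by rwa [mem_ball_zero_iff], hxeq⟩
      have := hup sx hsxS sx hsxS
      simp only [sub_self, norm_zero, mul_zero] at this
      calc ρ sx sx ≤ 0 := this
        _ < 2 * D * r := by positivity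
    have hyv : y ∈ C ∩ (T' + ball (0:E) r) :=
      ⟨hy, sy, ⟨hsyS, hco⟩, by', by rwa [mem_ball_zero_iff], hyeq⟩
    obtain ⟨c, hcC, hcu, hcv⟩ := hCpath.isConnected.isPreconnected _ _ hu hv hsub
      ⟨x, hxu⟩ ⟨y, hyv⟩
    obtain ⟨s, ⟨hsS, hslt⟩, b, hb, hceq⟩ := hcu
    obtain ⟨s', ⟨hs'S, hs'ge⟩, b', hb', hceq'⟩ := hcv
    rw [mem_ball_zero_iff] at hb hb'
    have hnorm : ‖s - s'‖ < 2 * r := by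
      have h : s + b = s' + b' := hceq.trans hceq'.symm
      have : s - s' = b' - b := by
        rw [sub_eq_sub_iff_add_eq_add, h, add_comm]
      rw [this]
      calc ‖b' - b‖ ≤ ‖b'‖ + ‖b‖ := norm_sub_le _ _
        _ < r + r := add_lt_add hb' hb
        _ = 2 * r := by ring
    have hρss' : ρ s s' < 2 * D * r := by
      calc ρ s s' ≤ D * ‖s - s'‖ := hup s hsS s' hs'S
        _ < D * (2 * r) := by exact (mul_lt_mul_iff_right₀ hD0).mpr hnorm
        _ = 2 * D * r := by ring
    have : ρ sx s' ≤ max (ρ sx s) (ρ s s') := hultra sx hsxS s' hs'S s hsS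
    have : ρ sx s' < 2 * D * r := lt_of_le_of_lt this (max_lt hslt hρss')
    exact absurd hs'ge (not_le.mpr this)
  have hxy : ‖x - y‖ ≤ ‖sx - sy‖ + (‖bx‖ + ‖by'‖) := by
    have : x - y = (sx - sy) + (bx - by') := by
      rw [← hxeq, ← hyeq]; beta_reduce; abel
    rw [this]
    calc ‖sx - sy + (bx - by')‖ ≤ ‖sx - sy‖ + ‖bx - by'‖ := norm_add_le _ _
      _ ≤ ‖sx - sy‖ + (‖bx‖ + ‖by'‖) := by gcongr; exact norm_sub_le _ _
  rw [dist_eq_norm]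
  have hlow' := hlow sx hsxS sy hsyS
  calc ‖x - y‖ ≤ ‖sx - sy‖ + (‖bx‖ + ‖by'‖) := hxy
    _ ≤ 2 * D * r + (r + r) := by
        gcongr <;> first
          | exact hlow'.trans key.le
          | exact hbx.le
          | exact hby.le
    _ = 2 * (D + 1) * r := by ring
end

section
/- For every D > 1, every n ∈ ℕ, and every norm ‖·‖ on ℝⁿ, every subset S ⊆ ℝⁿ admitting an ultrametric ρ with ‖x−y‖ ≤ ρ(x,y) ≤ D·‖x−y‖ for all x,y ∈ S has Hausdorff dimension at most (1 − 1/(2(D+1)))·n. -/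
open MeasureTheory Module Metric Set Filter Topology
open scoped ENNReal NNReal

namespace Stmt3

variable {E : Type*} [NormedAddCommGroup E] [NormedSpace ℝ E] [FiniteDimensional ℝ E]

/-- Bundled hypotheses: `ρ` is an ultrametric on `S` with distortion at most `D`. -/
structure Ctx (D : ℝ) (S : Set E) (ρ : E → E → ℝ) : Prop where
  hD : 1 < D
  hsymm : ∀ x ∈ S, ∀ y ∈ S, ρ x y = ρ y x
  hultra : ∀ x ∈ S, ∀ y ∈ S, ∀ z ∈ S, ρ x y ≤ max (ρ x z) (ρ z y)
  hlow : ∀ x ∈ S, ∀ y ∈ S, ‖x - y‖ ≤ ρ x y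
  hup : ∀ x ∈ S, ∀ y ∈ S, ρ x y ≤ D * ‖x - y‖

/-- `ρ`-ball (equivalence class at scale `u`) inside `T`. -/
def cls (ρ : E → E → ℝ) (T : Set E) (u : ℝ) (x : E) : Set E := {y ∈ T | ρ x y ≤ u}

/-- The scaling lemma: blowing up a sausage around a set of radius `u` about `x0`. -/
lemma thickening_scale [MeasurableSpace E] [BorelSpace E]
    (μ : Measure E) [μ.IsAddHaarMeasure] {K : Set E} {x0 : E}
    {u r r' : ℝ} (hr' : 0 < r') (hrr : r' ≤ r) (hu : 0 ≤ u)
    (hK : ∀ y ∈ K, ‖y - x0‖ ≤ u) :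
    ENNReal.ofReal (((u + r) / (u + r')) ^ finrank ℝ E) * μ (thickening r' K)
      ≤ μ (thickening r K) := by
  set t := (u + r) / (u + r') with ht
  have hur' : 0 < u + r' := by linarith
  have ht1 : 1 ≤ t := (one_le_div hur').2 (by linarith)
  have ht0 : 0 < t := lt_of_lt_of_le one_pos ht1
  have htne : t ≠ 0 := ne_of_gt ht0
  have hmul : t * (u + r') = u + r := div_mul_cancel₀ _ (ne_of_gt hur')
  set c := x0 - t • x0 with hc
  -- the image of the small sausage under the homothety lands in the big sausage
  have himg : (fun z => c + t • z) '' thickening r' K ⊆ thickening r K := by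
    rintro _ ⟨z, hz, rfl⟩
    rcases mem_thickening_iff.1 hz with ⟨x, hxK, hdz⟩
    refine mem_thickening_iff.2 ⟨x, hxK, ?_⟩
    have hdecomp : c + t • z - x = t • (z - x) + (t - 1) • (x - x0) := by
      rw [hc]; module
    have hb1 : ‖t • (z - x)‖ < t * r' := by
      rw [norm_smul, Real.norm_eq_abs, abs_of_pos ht0]
      have : ‖z - x‖ < r' := by rw [← dist_eq_norm]; exact hdz
      exact (mul_lt_mul_iff_right₀ ht0).2 this
    have hb2 : ‖(t - 1) • (x - x0)‖ ≤ (t - 1) * u := by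
      rw [norm_smul, Real.norm_eq_abs, abs_of_nonneg (by linarith)]
      exact mul_le_mul_of_nonneg_left (hK x hxK) (by linarith)
    calc dist (c + t • z) x = ‖c + t • z - x‖ := dist_eq_norm _ _
      _ = ‖t • (z - x) + (t - 1) • (x - x0)‖ := by rw [hdecomp]
      _ ≤ ‖t • (z - x)‖ + ‖(t - 1) • (x - x0)‖ := norm_add_le _ _
      _ < t * r' + (t - 1) * u := add_lt_add_of_lt_of_le hb1 hb2
      _ = r := by nlinarith [hmul]
  -- the image is a preimage under the inverse affine map
  have hset : (fun z => c + t • z) '' thickening r' K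
      = (fun w => (-c) + w) ⁻¹' ((fun w => t⁻¹ • w) ⁻¹' thickening r' K) := by
    ext w
    constructor
    · rintro ⟨z, hz, rfl⟩
      simp only [Set.mem_preimage]
      have : t⁻¹ • (-c + (c + t • z)) = z := by
        rw [neg_add_cancel_left, smul_smul, inv_mul_cancel₀ htne, one_smul]
      rw [this]; exact hz
    · intro hw
      refine ⟨t⁻¹ • (-c + w), hw, ?_⟩
      show c + t • t⁻¹ • (-c + w) = w
      rw [smul_smul, mul_inv_cancel₀ htne, one_smul, add_neg_cancel_left]
  have hmeas : μ ((fun z => c + t • z) '' thickening r' K)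
      = ENNReal.ofReal (t ^ finrank ℝ E) * μ (thickening r' K) := by
    rw [hset, measure_preimage_add, Measure.addHaar_preimage_smul μ (inv_ne_zero htne)]
    congr 1
    rw [inv_pow, inv_inv, abs_of_pos (pow_pos ht0 _)]
  calc ENNReal.ofReal (t ^ finrank ℝ E) * μ (thickening r' K)
      = μ ((fun z => c + t • z) '' thickening r' K) := hmeas.symm
    _ ≤ μ (thickening r K) := measure_mono himg


/-- Numeric core: with `lam = (2D+1)/(2D+2)` and `tfac = (2D+1)/(2D+lam)`,
if `d > (1 - 1/(2(D+1))) n` then `lam ^ d < lam ^ n * tfac ^ n`. -/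
lemma numeric {D : ℝ} (hD : 1 < D) {n : ℕ} (hn : 0 < n) {d : ℝ}
    (hd : (1 - 1 / (2 * (D + 1))) * n < d) :
    ((2*D+1)/(2*D+2)) ^ d
      < ((2*D+1)/(2*D+2)) ^ n * ((2*D+1)/(2*D + (2*D+1)/(2*D+2))) ^ n := by
  have hD0 : (0:ℝ) < D := by linarith
  set lam : ℝ := (2*D+1)/(2*D+2) with hlam
  have h21 : (0:ℝ) < 2*D+1 := by linarith
  have h22 : (0:ℝ) < 2*D+2 := by linarith
  have hlam0 : 0 < lam := div_pos h21 h22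
  have hlam1 : lam < 1 := (div_lt_one h22).2 (by linarith)
  set tfac : ℝ := (2*D+1)/(2*D + lam) with htfac
  have hden : (0:ℝ) < 2*D + lam := by positivity
  have htfac1 : 1 < tfac := (one_lt_div hden).2 (by linarith)
  have htfac0 : 0 < tfac := lt_trans one_pos htfac1
  set δ : ℝ := 1 / (2*(D+1)) with hδ
  have hδ0 : 0 < δ := by positivity
  -- step 1 : lam ^ d < lam ^ ((1-δ)*n)
  have step1 : lam ^ d < lam ^ ((1-δ) * (n:ℝ)) :=
    Real.rpow_lt_rpow_of_exponent_gt hlam0 hlam1 hd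
  -- step 2 : lam ^ (-δ) ≤ tfac
  have hlog1 : -Real.log lam ≤ 1/(2*D+1) := by
    have := Real.log_le_sub_one_of_pos (show (0:ℝ) < lam⁻¹ by positivity)
    rw [Real.log_inv] at this
    have heq : lam⁻¹ - 1 = 1/(2*D+1) := by
      rw [hlam]; rw [inv_div]; field_simp; ring
    linarith [this, heq]
  have hlog2 : 1/((2*D+1)*(2*D+2)) ≤ Real.log tfac := by
    have := Real.log_le_sub_one_of_pos (show (0:ℝ) < tfac⁻¹ by positivity)
    rw [Real.log_inv] at this
    have heq : 1 - tfac⁻¹ = 1/((2*D+1)*(2*D+2)) := by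
      rw [htfac, hlam]
      rw [inv_div]
      field_simp
      ring
    linarith
  have hexp : lam ^ (-δ) ≤ tfac := by
    rw [Real.rpow_def_of_pos hlam0, ← Real.exp_log htfac0]
    apply Real.exp_le_exp.2
    have hδval : δ = 1/(2*D+2) := by rw [hδ]; ring_nf
    calc Real.log lam * -δ = δ * (-Real.log lam) := by ring
      _ ≤ δ * (1/(2*D+1)) := by
          apply mul_le_mul_of_nonneg_left hlog1 (le_of_lt hδ0)
      _ = 1/((2*D+1)*(2*D+2)) := by rw [hδval]; field_simp
      _ ≤ Real.log tfac := hlog2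
  -- step 3 : lam ^ ((1-δ)*n) ≤ lam^n * tfac^n
  have step3 : lam ^ ((1-δ) * (n:ℝ)) ≤ lam ^ n * tfac ^ n := by
    have h1 : lam ^ ((1-δ) * (n:ℝ)) = (lam ^ (1-δ)) ^ n := by
      rw [← Real.rpow_natCast (lam ^ (1-δ)) n, ← Real.rpow_mul (le_of_lt hlam0)]
    have h2 : lam ^ (1-δ) = lam * lam ^ (-δ) := by
      rw [show (1-δ) = 1 + (-δ) by ring, Real.rpow_add hlam0, Real.rpow_one]
    have h3 : lam ^ (1-δ) ≤ lam * tfac := by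
      rw [h2]
      exact mul_le_mul_of_nonneg_left hexp (le_of_lt hlam0)
    calc lam ^ ((1-δ) * (n:ℝ)) = (lam ^ (1-δ)) ^ n := h1
      _ ≤ (lam * tfac) ^ n := by
          apply pow_le_pow_left₀ (Real.rpow_nonneg (le_of_lt hlam0) _) h3
      _ = lam ^ n * tfac ^ n := mul_pow _ _ _
  exact lt_of_lt_of_le step1 step3


variable {D : ℝ} {S T : Set E} {ρ : E → E → ℝ} {u : ℝ}

lemma Ctx.rho_self (hc : Ctx D S ρ) {x : E} (hx : x ∈ S) : ρ x x = 0 := by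
  have h1 := hc.hlow x hx x hx
  have h2 := hc.hup x hx x hx
  simp only [sub_self, norm_zero] at h1 h2
  linarith [h1, h2]

lemma cls_subset : cls ρ T u x ⊆ T := fun _ h => h.1

lemma mem_cls_self (hc : Ctx D S ρ) (hTS : T ⊆ S) (hu : 0 ≤ u) {x : E} (hx : x ∈ T) :
    x ∈ cls ρ T u x := ⟨hx, by rw [hc.rho_self (hTS hx)]; exact hu⟩

lemma cls_eq_of_mem (hc : Ctx D S ρ) (hTS : T ⊆ S) {x y : E} (hx : x ∈ T)
    (hy : y ∈ cls ρ T u x) : cls ρ T u y = cls ρ T u x := by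
  obtain ⟨hyT, hxy⟩ := hy
  ext z
  constructor
  · rintro ⟨hzT, hyz⟩
    refine ⟨hzT, ?_⟩
    have := hc.hultra x (hTS hx) z (hTS hzT) y (hTS hyT)
    exact le_trans this (max_le hxy hyz)
  · rintro ⟨hzT, hxz⟩
    refine ⟨hzT, ?_⟩
    have := hc.hultra y (hTS hyT) z (hTS hzT) x (hTS hx)
    have hyx : ρ y x = ρ x y := hc.hsymm y (hTS hyT) x (hTS hx)
    exact le_trans this (max_le (hyx ▸ hxy) hxz)

/-- Any two points of a class are `ρ`-close and hence norm-close. -/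
lemma norm_le_of_mem_cls (hc : Ctx D S ρ) (hTS : T ⊆ S) {x y z : E} (hx : x ∈ T)
    (hy : y ∈ cls ρ T u x) (hz : z ∈ cls ρ T u x) : ‖y - z‖ ≤ u := by
  obtain ⟨hyT, hxy⟩ := hy
  obtain ⟨hzT, hxz⟩ := hz
  have hu := hc.hultra y (hTS hyT) z (hTS hzT) x (hTS hx)
  have hyx : ρ y x = ρ x y := hc.hsymm y (hTS hyT) x (hTS hx)
  have : ρ y z ≤ u := le_trans hu (max_le (hyx ▸ hxy) hxz)
  exact le_trans (hc.hlow y (hTS hyT) z (hTS hzT)) this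

/-- Covering at scale `r`: classes at scale `2 D r` built on a dense subset cover `T`. -/
lemma cls_cover (hc : Ctx D S ρ) (hTS : T ⊆ S) {Q : Set E} (hQd : T ⊆ closure Q)
    (hQT : Q ⊆ T) {r : ℝ} (hr : 0 < r) {x : E} (hx : x ∈ T) :
    ∃ q ∈ Q, x ∈ cls ρ T (2*D*r) q := by
  have hD0 : (0:ℝ) < D := by linarith [hc.hD]
  rcases Metric.mem_closure_iff.1 (hQd hx) r hr with ⟨q, hqQ, hxq⟩
  refine ⟨q, hqQ, hx, ?_⟩
  have h1 : ρ q x ≤ D * ‖q - x‖ := hc.hup q (hTS (hQT hqQ)) x (hTS hx)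
  have h2 : ‖q - x‖ < r := by rw [← dist_eq_norm]; rw [dist_comm]; exact hxq
  nlinarith [h1, h2, hD0]

/-- Thickenings at radius `r` of distinct classes at scale `2 D r` are disjoint. -/
lemma cls_disjoint (hc : Ctx D S ρ) (hTS : T ⊆ S) {Q : Set E} (hQT : Q ⊆ T) {r : ℝ}
    (hr : 0 < r) :
    ((cls ρ T (2*D*r)) '' Q).PairwiseDisjoint (fun K => thickening r K) := by
  have hD0 : (0:ℝ) < D := by linarith [hc.hD]
  rintro K1 hK1 K2 hK2 hne
  obtain ⟨q1, hq1, rfl⟩ := hK1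
  obtain ⟨q2, hq2, rfl⟩ := hK2
  refine Set.disjoint_left.2 fun z hz1 hz2 => hne ?_
  rcases mem_thickening_iff.1 hz1 with ⟨a, haK, hza⟩
  rcases mem_thickening_iff.1 hz2 with ⟨b, hbK, hzb⟩
  have haT : a ∈ T := haK.1
  have hbT : b ∈ T := hbK.1
  have hab : ‖a - b‖ < 2*r := by
    have := dist_triangle a z b
    rw [← dist_eq_norm]
    rw [dist_comm a z] at this
    linarith [hza, hzb, this]
  have hrho : ρ a b ≤ 2*D*r := by
    have := hc.hup a (hTS haT) b (hTS hbT)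
    nlinarith [hab]
  have h1 : cls ρ T (2*D*r) a = cls ρ T (2*D*r) q1 := cls_eq_of_mem hc hTS (hQT hq1) haK
  have h2 : cls ρ T (2*D*r) b = cls ρ T (2*D*r) q2 := cls_eq_of_mem hc hTS (hQT hq2) hbK
  have h3 : b ∈ cls ρ T (2*D*r) a := ⟨hbT, hrho⟩
  have h4 : cls ρ T (2*D*r) b = cls ρ T (2*D*r) a := cls_eq_of_mem hc hTS haT h3
  rw [← h1, ← h4, h2]


section Meas
variable [MeasurableSpace E] [BorelSpace E] (μ : Measure E) [μ.IsAddHaarMeasure]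

/-- Sum of the measures of the `r`-sausages of the classes at scale `2Dr` is at most the
measure of the `r`-sausage of `T`. -/
lemma tsum_thick_le (hc : Ctx D S ρ) (hTS : T ⊆ S) {Q : Set E} (hQT : Q ⊆ T)
    (hQc : Q.Countable) {r : ℝ} (hr : 0 < r) :
    ∑' K : ↥((cls ρ T (2*D*r)) '' Q), μ (thickening r (K : Set E))
      ≤ μ (thickening r T) := by
  rw [← measure_biUnion (hQc.image _) (cls_disjoint hc hTS hQT hr)
      (fun K _ => isOpen_thickening.measurableSet)]
  apply measure_mono
  refine Set.iUnion₂_subset fun K hK => ?_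
  obtain ⟨q, _, rfl⟩ := hK
  exact thickening_subset_of_subset r cls_subset

/-- One-step inequality. -/
lemma level (hc : Ctx D S ρ) (hTS : T ⊆ S) {Q : Set E} (hQT : Q ⊆ T)
    (hQc : Q.Countable) (hQd : T ⊆ closure Q) {r lam : ℝ} (hr : 0 < r)
    (hlam0 : 0 < lam) (hlam1 : lam ≤ 1) :
    ENNReal.ofReal (((2*D+1) / (2*D+lam)) ^ finrank ℝ E) * μ (thickening (lam * r) T)
      ≤ μ (thickening r T) := by
  have hD0 : (0:ℝ) < D := by linarith [hc.hD]
  set u : ℝ := 2*D*r with hu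
  have hu0 : 0 < u := by positivity
  set 𝒞 : Set (Set E) := (cls ρ T u) '' Q with h𝒞
  haveI : Countable ↥𝒞 := (hQc.image _).to_subtype
  -- covering at the smaller radius
  have hcov : thickening (lam * r) T ⊆ ⋃ K ∈ 𝒞, thickening (lam * r) K := by
    intro z hz
    rcases mem_thickening_iff.1 hz with ⟨x, hxT, hzx⟩
    obtain ⟨q, hqQ, hxq⟩ := cls_cover hc hTS hQd hQT hr hxT
    exact Set.mem_biUnion (Set.mem_image_of_mem _ hqQ)
      (mem_thickening_iff.2 ⟨x, hxq, hzx⟩)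
  have step1 : μ (thickening (lam * r) T) ≤ ∑' K : ↥𝒞, μ (thickening (lam * r) (K : Set E)) :=
    le_trans (measure_mono hcov) (measure_biUnion_le μ (hQc.image _) _)
  -- per-class scaling
  have hfac : ∀ K : ↥𝒞,
      ENNReal.ofReal (((2*D+1) / (2*D+lam)) ^ finrank ℝ E) * μ (thickening (lam * r) (K : Set E))
        ≤ μ (thickening r (K : Set E)) := by
    rintro ⟨K, hK⟩
    obtain ⟨q, hqQ, rfl⟩ := hK
    have hfrac : (u + r) / (u + lam * r) = (2*D+1) / (2*D+lam) := by
      rw [hu]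
      rw [show 2*D*r + r = r * (2*D+1) by ring, show 2*D*r + lam*r = r * (2*D+lam) by ring]
      rw [mul_div_mul_left _ _ (ne_of_gt hr)]
    have := thickening_scale (x0 := q) μ (by positivity : 0 < lam * r)
      (by nlinarith : lam * r ≤ r) (le_of_lt hu0)
      (fun y hy => by
        rw [norm_sub_rev]
        exact norm_le_of_mem_cls hc hTS (hQT hqQ)
          (mem_cls_self hc hTS (le_of_lt hu0) (hQT hqQ)) hy)
    rwa [hfrac] at this
  calc ENNReal.ofReal (((2*D+1) / (2*D+lam)) ^ finrank ℝ E) * μ (thickening (lam * r) T)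
      ≤ ENNReal.ofReal (((2*D+1) / (2*D+lam)) ^ finrank ℝ E)
          * ∑' K : ↥𝒞, μ (thickening (lam * r) (K : Set E)) := by
        exact mul_le_mul_right step1 _
    _ = ∑' K : ↥𝒞, ENNReal.ofReal (((2*D+1) / (2*D+lam)) ^ finrank ℝ E)
          * μ (thickening (lam * r) (K : Set E)) := ENNReal.tsum_mul_left.symm
    _ ≤ ∑' K : ↥𝒞, μ (thickening r (K : Set E)) := ENNReal.tsum_le_tsum hfac
    _ ≤ μ (thickening r T) := tsum_thick_le μ hc hTS hQT hQc hr

/-- Iterated inequality. -/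
lemma iterate (hc : Ctx D S ρ) (hTS : T ⊆ S) {Q : Set E} (hQT : Q ⊆ T)
    (hQc : Q.Countable) (hQd : T ⊆ closure Q) {lam : ℝ}
    (hlam0 : 0 < lam) (hlam1 : lam ≤ 1) (m : ℕ) :
    (ENNReal.ofReal (((2*D+1) / (2*D+lam)) ^ finrank ℝ E)) ^ m * μ (thickening (lam ^ m) T)
      ≤ μ (thickening 1 T) := by
  induction m with
  | zero => simp
  | succ m ih =>
    have hstep := level μ hc hTS hQT hQc hQd (r := lam ^ m)
      (pow_pos hlam0 m) hlam0 hlam1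
    calc (ENNReal.ofReal (((2*D+1) / (2*D+lam)) ^ finrank ℝ E)) ^ (m+1)
          * μ (thickening (lam ^ (m+1)) T)
        = (ENNReal.ofReal (((2*D+1) / (2*D+lam)) ^ finrank ℝ E)) ^ m
          * ((ENNReal.ofReal (((2*D+1) / (2*D+lam)) ^ finrank ℝ E))
            * μ (thickening (lam * lam ^ m) T)) := by
          rw [pow_succ, pow_succ]; ring_nf
    _ ≤ (ENNReal.ofReal (((2*D+1) / (2*D+lam)) ^ finrank ℝ E)) ^ m
          * μ (thickening (lam ^ m) T) := mul_le_mul_right hstep _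
    _ ≤ μ (thickening 1 T) := ih

end Meas

/-- Key lemma: bounded pieces have vanishing `d`-Hausdorff measure. -/
lemma key [MeasurableSpace E] [BorelSpace E] (hc : Ctx D S ρ)
    (hpos : 0 < finrank ℝ E) (hTS : T ⊆ S) (hTb : Bornology.IsBounded T)
    {d : ℝ} (hd : (1 - 1/(2*(D+1))) * finrank ℝ E < d) : μH[d] T = 0 := by
  have hD : 1 < D := hc.hD
  have hD0 : (0:ℝ) < D := by linarith
  haveI : Nontrivial E := nontrivial_of_finrank_pos (R := ℝ) hpos
  set n := finrank ℝ E with hn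
  set μ : Measure E := Measure.addHaar with hμ
  set lam : ℝ := (2*D+1)/(2*D+2) with hlam
  have h21 : (0:ℝ) < 2*D+1 := by linarith
  have h22 : (0:ℝ) < 2*D+2 := by linarith
  have hlam0 : 0 < lam := div_pos h21 h22
  have hlam1 : lam < 1 := (div_lt_one h22).2 (by linarith)
  set tfac : ℝ := (2*D+1)/(2*D + lam) with htfac
  have hden : (0:ℝ) < 2*D + lam := by positivity
  have htfac1 : 1 < tfac := (one_lt_div hden).2 (by linarith)
  have htfac0 : 0 < tfac := lt_trans one_pos htfac1
  have hd0 : 0 ≤ d := by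
    have h1 : (0:ℝ) ≤ 1 - 1/(2*(D+1)) := by
      have : 1/(2*(D+1)) ≤ 1 := by
        rw [div_le_one (by linarith)]; linarith
      linarith
    have h2 : (0:ℝ) ≤ (1 - 1/(2*(D+1))) * n := by positivity
    linarith
  -- countable dense subset of T
  obtain ⟨Q, hQT, hQc, hQd⟩ :=
    (TopologicalSpace.IsSeparable.of_separableSpace T).exists_countable_dense_subset
  -- families of classes
  set 𝒞 : ℕ → Set (Set E) := fun m => (cls ρ T (2*D*(lam ^ m))) '' Q with h𝒞
  haveI hcnt : ∀ m, Countable ↥(𝒞 m) := fun m => (hQc.image _).to_subtype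
  -- finiteness of relevant measures
  have hM : μ (thickening 1 T) ≠ ⊤ := by
    obtain ⟨R, hR⟩ := (hTb.thickening (δ := 1)).subset_closedBall (0 : E)
    exact ne_top_of_le_ne_top (isCompact_closedBall (0:E) R).measure_lt_top.ne
      (measure_mono hR)
  have vB0 : μ (ball (0:E) 1) ≠ 0 := (measure_ball_pos μ 0 one_pos).ne'
  have vBtop : μ (ball (0:E) 1) ≠ ⊤ := by
    exact ne_top_of_le_ne_top (isCompact_closedBall (0:E) 1).measure_lt_top.ne
      (measure_mono ball_subset_closedBall)
  -- diameters of classes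
  have hdiam : ∀ m, ∀ K : ↥(𝒞 m), EMetric.diam (K : Set E)
      ≤ ENNReal.ofReal (2*D*lam ^ m) := by
    rintro m ⟨K, hK⟩
    obtain ⟨q, hqQ, rfl⟩ := hK
    refine EMetric.diam_le fun y hy z hz => ?_
    rw [edist_dist, dist_eq_norm]
    exact ENNReal.ofReal_le_ofReal
      (norm_le_of_mem_cls hc hTS (hQT hqQ) hy hz)
  -- coverings
  have hcover : ∀ m, T ⊆ ⋃ K : ↥(𝒞 m), (K : Set E) := by
    intro m x hx
    obtain ⟨q, hqQ, hx'⟩ := cls_cover hc hTS hQd hQT (pow_pos hlam0 m) hx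
    exact mem_iUnion.2 ⟨⟨_, mem_image_of_mem _ hqQ⟩, hx'⟩
  -- mesh tends to zero
  have hmesh : Tendsto (fun m : ℕ => ENNReal.ofReal (2*D*lam ^ m)) atTop (𝓝 0) := by
    have h1 : Tendsto (fun m : ℕ => 2*D*lam ^ m) atTop (𝓝 (2*D*0)) :=
      (tendsto_pow_atTop_nhds_zero_of_lt_one hlam0.le hlam1).const_mul (2*D)
    rw [mul_zero] at h1
    simpa [ENNReal.ofReal_zero] using (ENNReal.tendsto_ofReal h1)
  -- the Hausdorff bound via coverings
  have hmain := Measure.hausdorffMeasure_le_liminf_tsum d T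
    (fun m => ENNReal.ofReal (2*D*lam ^ m)) hmesh
    (fun m (K : ↥(𝒞 m)) => (K : Set E))
    (Eventually.of_forall hdiam) (Eventually.of_forall hcover)
  set W : ℕ → ℝ≥0∞ := fun m => ∑' K : ↥(𝒞 m), EMetric.diam (K : Set E) ^ d with hW
  -- enough to show W → 0
  suffices hW0 : Tendsto W atTop (𝓝 0) by
    refine le_antisymm ?_ zero_le
    calc μH[d] T ≤ liminf W atTop := hmain
      _ = 0 := hW0.liminf_eq
  -- quantities
  set cF : ℝ≥0∞ := ENNReal.ofReal (tfac ^ n) with hcF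
  set vB : ℝ≥0∞ := μ (ball (0:E) 1) with hvB
  set M : ℝ≥0∞ := μ (thickening 1 T) with hMdef
  set P : ℕ → ℝ≥0∞ := fun m => ENNReal.ofReal ((lam ^ m) ^ n) * vB * cF ^ m with hP
  -- termwise estimate
  have hterm : ∀ m, ∀ K : ↥(𝒞 m),
      EMetric.diam (K : Set E) ^ d * (ENNReal.ofReal ((lam ^ m) ^ n) * vB)
        ≤ ENNReal.ofReal (2*D*lam ^ m) ^ d * μ (thickening (lam ^ m) (K : Set E)) := by
    rintro m ⟨K, hK⟩
    refine mul_le_mul' (ENNReal.rpow_le_rpow (hdiam m ⟨K, hK⟩) hd0) ?_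
    obtain ⟨q, hqQ, rfl⟩ := hK
    have hsub : ball q (lam ^ m) ⊆ thickening (lam ^ m) (cls ρ T (2*D*lam ^ m) q) :=
      ball_subset_thickening (mem_cls_self hc hTS (by positivity) (hQT hqQ)) _
    calc ENNReal.ofReal ((lam ^ m) ^ n) * vB = μ (ball q (lam ^ m)) := by
          rw [hvB, hμ]; exact (Measure.addHaar_ball _ q (by positivity)).symm
      _ ≤ μ (thickening (lam ^ m) (cls ρ T (2*D*lam ^ m) q)) := measure_mono hsub
  -- summed estimate
  have hsum : ∀ m, W m * (ENNReal.ofReal ((lam ^ m) ^ n) * vB)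
      ≤ ENNReal.ofReal (2*D*lam ^ m) ^ d * μ (thickening (lam ^ m) T) := by
    intro m
    calc W m * (ENNReal.ofReal ((lam ^ m) ^ n) * vB)
        = ∑' K : ↥(𝒞 m), EMetric.diam (K : Set E) ^ d
            * (ENNReal.ofReal ((lam ^ m) ^ n) * vB) := ENNReal.tsum_mul_right.symm
      _ ≤ ∑' K : ↥(𝒞 m), ENNReal.ofReal (2*D*lam ^ m) ^ d
            * μ (thickening (lam ^ m) (K : Set E)) := ENNReal.tsum_le_tsum (hterm m)
      _ = ENNReal.ofReal (2*D*lam ^ m) ^ d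
            * ∑' K : ↥(𝒞 m), μ (thickening (lam ^ m) (K : Set E)) := ENNReal.tsum_mul_left
      _ ≤ ENNReal.ofReal (2*D*lam ^ m) ^ d * μ (thickening (lam ^ m) T) :=
          mul_le_mul_right (tsum_thick_le μ hc hTS hQT hQc (pow_pos hlam0 m)) _
  -- with the iterate
  have hWP : ∀ m, W m * P m ≤ ENNReal.ofReal (2*D*lam ^ m) ^ d * M := by
    intro m
    have h1 := mul_le_mul_left (hsum m) (cF ^ m)
    have h2 := iterate μ hc hTS hQT hQc hQd hlam0 hlam1.le m
    calc W m * P m = W m * (ENNReal.ofReal ((lam ^ m) ^ n) * vB) * cF ^ m := by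
          rw [hP]; ring
      _ ≤ ENNReal.ofReal (2*D*lam ^ m) ^ d * μ (thickening (lam ^ m) T) * cF ^ m := h1
      _ = ENNReal.ofReal (2*D*lam ^ m) ^ d * (cF ^ m * μ (thickening (lam ^ m) T)) := by
          ring
      _ ≤ ENNReal.ofReal (2*D*lam ^ m) ^ d * M := by
          refine mul_le_mul_right ?_ _
          rw [hMdef]
          exact h2
  -- closed form for the right-hand side
  set qq : ℝ≥0∞ := ENNReal.ofReal (lam ^ d / (lam ^ n * tfac ^ n)) with hqq
  set B : ℝ≥0∞ := ENNReal.ofReal ((2*D) ^ d) * M * vB⁻¹ with hB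
  have hlamn0 : (0:ℝ) < lam ^ n * tfac ^ n := by positivity
  have e1 : qq * (ENNReal.ofReal (lam ^ n) * ENNReal.ofReal (tfac ^ n))
      = ENNReal.ofReal (lam ^ d) := by
    rw [hqq, ← ENNReal.ofReal_mul (by positivity), ← ENNReal.ofReal_mul (by positivity)]
    congr 1
    exact div_mul_cancel₀ _ (ne_of_gt hlamn0)
  have hclosed : ∀ m, B * qq ^ m * P m = ENNReal.ofReal (2*D*lam ^ m) ^ d * M := by
    intro m
    have hpow : ENNReal.ofReal ((lam ^ m) ^ n) = ENNReal.ofReal (lam ^ n) ^ m := by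
      rw [← ENNReal.ofReal_pow (by positivity), ← pow_mul, ← pow_mul, mul_comm]
    have hreal : (2*D) ^ d * (lam ^ d) ^ m = (2*D*lam ^ m) ^ d := by
      have h1 : (lam ^ d) ^ m = (lam ^ m) ^ d := by
        rw [← Real.rpow_natCast (lam ^ d) m, ← Real.rpow_mul hlam0.le, mul_comm,
          Real.rpow_mul hlam0.le, Real.rpow_natCast]
      rw [h1, ← Real.mul_rpow (by positivity) (by positivity)]
    calc B * qq ^ m * P m
        = ENNReal.ofReal ((2*D) ^ d)
            * (qq * (ENNReal.ofReal (lam ^ n) * ENNReal.ofReal (tfac ^ n))) ^ m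
            * M * (vB⁻¹ * vB) := by
          simp only [hB, hP, hcF, hpow, mul_pow]; ring
      _ = ENNReal.ofReal ((2*D) ^ d) * ENNReal.ofReal (lam ^ d) ^ m * M := by
          rw [e1, ENNReal.inv_mul_cancel vB0 vBtop, mul_one]
      _ = ENNReal.ofReal ((2*D) ^ d * (lam ^ d) ^ m) * M := by
          rw [← ENNReal.ofReal_pow (Real.rpow_nonneg hlam0.le _),
            ← ENNReal.ofReal_mul (Real.rpow_nonneg (by positivity) _)]
      _ = ENNReal.ofReal ((2*D*lam ^ m) ^ d) * M := by rw [hreal]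
      _ = ENNReal.ofReal (2*D*lam ^ m) ^ d * M := by
          rw [ENNReal.ofReal_rpow_of_pos (by positivity)]
  -- cancellation
  have hP0 : ∀ m, P m ≠ 0 := by
    intro m
    rw [hP]
    refine mul_ne_zero (mul_ne_zero ?_ vB0) ?_
    · exact (ENNReal.ofReal_pos.2 (by positivity)).ne'
    · exact pow_ne_zero _ ((ENNReal.ofReal_pos.2 (by positivity)).ne')
  have hPtop : ∀ m, P m ≠ ⊤ := by
    intro m
    rw [hP]
    exact ENNReal.mul_ne_top (ENNReal.mul_ne_top ENNReal.ofReal_ne_top vBtop)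
      (ENNReal.pow_ne_top ENNReal.ofReal_ne_top)
  have hWle : ∀ m, W m ≤ B * qq ^ m := by
    intro m
    have := (hWP m).trans_eq (hclosed m).symm
    exact (ENNReal.mul_le_mul_iff_left (hP0 m) (hPtop m)).1 this
  -- geometric decay
  have hqq1 : qq < 1 := by
    rw [hqq, ENNReal.ofReal_lt_one, div_lt_one hlamn0]
    exact numeric hD hpos hd
  have hBtop : B ≠ ⊤ := by
    rw [hB]
    exact ENNReal.mul_ne_top (ENNReal.mul_ne_top ENNReal.ofReal_ne_top hM)
      (ENNReal.inv_ne_top.2 vB0)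
  have hgeo : Tendsto (fun m : ℕ => B * qq ^ m) atTop (𝓝 0) := by
    have := ENNReal.Tendsto.const_mul
      (ENNReal.tendsto_pow_atTop_nhds_zero_of_lt_one hqq1) (Or.inr hBtop)
    simpa using this
  exact tendsto_of_tendsto_of_tendsto_of_le_of_le tendsto_const_nhds hgeo
    (fun m => zero_le) hWle



end Stmt3


/-- Main theorem: for every `D > 1`, every `n`, and every norm on `ℝⁿ` (formalized as an
`n`-dimensional real normed space `E`), any subset `S ⊆ E` admitting an ultrametric `ρ`
with `‖x-y‖ ≤ ρ(x,y) ≤ D‖x-y‖` on `S` has Hausdorff dimension at most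
`(1 - 1/(2(D+1))) n`. -/

theorem stmt_3 {E : Type*} [NormedAddCommGroup E] [NormedSpace ℝ E] [FiniteDimensional ℝ E]
    (n : ℕ) (hn : finrank ℝ E = n) (D : ℝ) (hD : 1 < D)
    (S : Set E) (ρ : E → E → ℝ)
    (hsymm : ∀ x ∈ S, ∀ y ∈ S, ρ x y = ρ y x)
    (hultra : ∀ x ∈ S, ∀ y ∈ S, ∀ z ∈ S, ρ x y ≤ max (ρ x z) (ρ z y))
    (hlow : ∀ x ∈ S, ∀ y ∈ S, ‖x - y‖ ≤ ρ x y)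
    (hup : ∀ x ∈ S, ∀ y ∈ S, ρ x y ≤ D * ‖x - y‖) :
    dimH S ≤ ENNReal.ofReal ((1 - 1 / (2 * (D + 1))) * n) := by
  subst hn
  borelize E
  have hc : Stmt3.Ctx D S ρ := ⟨hD, hsymm, hultra, hlow, hup⟩
  rcases Nat.eq_zero_or_pos (finrank ℝ E) with h0 | hpos
  · have hzero : ∀ x : E, x = 0 := finrank_zero_iff_forall_zero.mp h0
    have hS : S.Subsingleton := fun x _ y _ => by rw [hzero x, hzero y]
    rw [dimH_subsingleton hS]
    exact zero_le
  · have hc0 : (0:ℝ) ≤ (1 - 1/(2*(D+1))) * finrank ℝ E := by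
      have h1 : 1/(2*(D+1)) ≤ 1 := by
        rw [div_le_one (by linarith)]; linarith
      have : (0:ℝ) ≤ 1 - 1/(2*(D+1)) := by linarith
      positivity
    refine dimH_le fun d' hd' => ?_
    by_contra hlt
    push_neg at hlt
    have hcd : (1 - 1/(2*(D+1))) * finrank ℝ E < (d' : ℝ) := by
      rw [← ENNReal.ofReal_coe_nnreal] at hlt
      exact (ENNReal.ofReal_lt_ofReal_iff_of_nonneg hc0).1 hlt
    have hz : μH[((d' : ℝ≥0) : ℝ)] S = 0 := by
      have hcover : S = ⋃ k : ℕ, S ∩ closedBall (0:E) k := by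
        ext x
        simp only [Set.mem_iUnion, Set.mem_inter_iff, Metric.mem_closedBall]
        constructor
        · intro hx
          exact ⟨⌈‖x‖⌉₊, hx, by rw [dist_zero_right]; exact Nat.le_ceil ‖x‖⟩
        · rintro ⟨k, hk, _⟩; exact hk
      rw [hcover]
      refine measure_iUnion_null fun k => ?_
      exact Stmt3.key hc hpos Set.inter_subset_left
        ((Metric.isBounded_closedBall).subset Set.inter_subset_right) hcd
    rw [hz] at hd'
    exact ENNReal.zero_ne_top hd'
end

section
/- Let ‖·‖ be a norm on ℝⁿ, S ⊆ ℝⁿ a set with ultrametric distortion at most D (D ≥ 1), and let δ > 0 and r > 0. Then the Lebesgue measures satisfy vol(S + B°(r)) ≤ (1 − (e^δ − 1)/(2(D+1)e^δ))ⁿ · vol(S + B°(e^δ r)), where B°(t) = {x : ‖x‖ < t} and + denotes Minkowski sum. -/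
open Metric Pointwise MeasureTheory Module Real

/-- Equation (2) of the paper: if `S` is a subset of `ℝⁿ` (an `n`-dimensional real normed
space) with ultrametric distortion at most `D`, then for every `δ > 0` and `r > 0`,
`vol(S + B°(r)) ≤ (1 - (e^δ - 1)/(2(D+1)e^δ))ⁿ · vol(S + B°(e^δ r))`,
where `vol` is the (Haar–Lebesgue) measure. -/
theorem stmt_5 {E : Type*} [NormedAddCommGroup E] [NormedSpace ℝ E] [FiniteDimensional ℝ E]
    [MeasurableSpace E] [BorelSpace E] (μ : Measure E) [μ.IsAddHaarMeasure]
    (n : ℕ) (hn : finrank ℝ E = n) (D : ℝ) (hD : 1 ≤ D)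
    (S : Set E) (ρ : E → E → ℝ)
    (hsymm : ∀ x ∈ S, ∀ y ∈ S, ρ x y = ρ y x)
    (hultra : ∀ x ∈ S, ∀ y ∈ S, ∀ z ∈ S, ρ x y ≤ max (ρ x z) (ρ z y))
    (hlow : ∀ x ∈ S, ∀ y ∈ S, ‖x - y‖ ≤ ρ x y)
    (hup : ∀ x ∈ S, ∀ y ∈ S, ρ x y ≤ D * ‖x - y‖)
    (δ r : ℝ) (hδ : 0 < δ) (hr : 0 < r) :
    μ (S + ball (0 : E) r) ≤
      ENNReal.ofReal ((1 - (exp δ - 1) / (2 * (D + 1) * exp δ)) ^ n) *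
        μ (S + ball (0 : E) (exp δ * r)) := by
  have hE : (0:ℝ) < exp δ := exp_pos δ
  have hexp : (1:ℝ) < exp δ := by
    have := Real.add_one_lt_exp (ne_of_gt hδ); linarith
  set t := exp δ * r with htdef
  have hrt : r < t := by nlinarith
  have ht : 0 < t := lt_trans hr hrt
  have hD0 : (0:ℝ) < D := lt_of_lt_of_le one_pos hD
  set s := 2 * D * t with hsdef
  have hs0 : (0:ℝ) < s := by positivity
  set lam := 1 - (exp δ - 1) / (2 * (D + 1) * exp δ) with hlamdef
  clear_value t s lam
  have hlam1 : lam < 1 := by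
    have h1 : 0 < (exp δ - 1) / (2 * (D + 1) * exp δ) := by
      apply div_pos (by linarith) (by positivity)
    simp only [hlamdef]; linarith
  have hlam0 : 0 < lam := by
    rw [hlamdef, sub_pos, div_lt_one (by positivity)]
    nlinarith
  have hkey : (1 - lam) * s + r < lam * t := by
    have h2 : lam * t - ((1 - lam) * s + r) = (t - r) / (2 * (D + 1)) := by
      rw [hlamdef, hsdef, htdef]
      field_simp
      ring
    have h3 : 0 < (t - r) / (2 * (D + 1)) := by
      apply div_pos (by linarith) (by positivity)
    linarith
  -- equivalence relation
  have refl0 : ∀ x : ↥S, ρ x x ≤ s := by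
    intro x
    have := hup x x.2 x x.2
    simp only [sub_self, norm_zero, mul_zero] at this
    linarith
  let sd : Setoid ↥S :=
    ⟨fun x y => ρ x y ≤ s, by
      constructor
      · exact refl0
      · intro x y h; rwa [hsymm y y.2 x x.2]
      · intro x y z h1 h2
        exact le_trans (hultra x x.2 z z.2 y y.2) (max_le h1 h2)⟩
  have rel_def : ∀ x y : ↥S, (sd.r x y ↔ ρ x y ≤ s) := fun x y => Iff.rfl
  set C : Quotient sd → Set E := fun q => {y | ∃ h : y ∈ S, Quotient.mk sd ⟨y, h⟩ = q}
    with hCdef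
  set p : Quotient sd → E := fun q => ((Quotient.out q : ↥S) : E) with hpdef
  have hCS : ∀ q, C q ⊆ S := by rintro q y ⟨h, _⟩; exact h
  have hpC : ∀ q, p q ∈ C q := by
    intro q
    exact ⟨(Quotient.out q).2, by rw [show (⟨((Quotient.out q : ↥S) : E), (Quotient.out q).2⟩ : ↥S) = Quotient.out q from rfl, Quotient.out_eq]⟩
  have hsame : ∀ q, ∀ y ∈ C q, ∀ z ∈ C q, ρ y z ≤ s := by
    rintro q y ⟨hy, hyq⟩ z ⟨hz, hzq⟩
    have : Quotient.mk sd ⟨y, hy⟩ = Quotient.mk sd ⟨z, hz⟩ := by rw [hyq, hzq]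
    exact Quotient.exact this
  have hdiff : ∀ q q', q ≠ q' → ∀ y ∈ C q, ∀ z ∈ C q', 2 * t < ‖y - z‖ := by
    rintro q q' hne y ⟨hy, hyq⟩ z ⟨hz, hzq⟩
    have hgt : s < ρ y z := by
      by_contra h
      push_neg at h
      exact hne (by rw [← hyq, ← hzq]; exact Quotient.sound h)
    have := hup y hy z hz
    have h2 : s < D * ‖y - z‖ := lt_of_lt_of_le hgt this
    rw [hsdef] at h2
    nlinarith
  have hScover : (⋃ q, C q) = S := by
    ext x
    simp only [Set.mem_iUnion]
    constructor
    · rintro ⟨q, h, _⟩; exact h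
    · intro hx; exact ⟨Quotient.mk sd ⟨x, hx⟩, hx, rfl⟩
  -- countability
  obtain ⟨Qd, hQdc, hQdd⟩ := TopologicalSpace.exists_countable_dense E
  have hnear : ∀ q : Quotient sd, ∃ z, z ∈ Qd ∧ dist (p q) z < t := by
    intro q
    obtain ⟨z, hz1, hz2⟩ := hQdd.exists_dist_lt (p q) ht
    exact ⟨z, hz1, hz2⟩
  haveI : Countable ↥Qd := hQdc.to_subtype
  haveI : Countable (Quotient sd) := by
    have hinj : Function.Injective (fun q : Quotient sd =>
        (⟨(hnear q).choose, (hnear q).choose_spec.1⟩ : ↥Qd)) := by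
      intro q q' h
      by_contra hne
      have h1 := (hnear q).choose_spec.2
      have h2 := (hnear q').choose_spec.2
      have hsep := hdiff q q' hne (p q) (hpC q) (p q') (hpC q')
      have : (hnear q).choose = (hnear q').choose := congrArg Subtype.val h
      rw [this] at h1
      have : dist (p q) (p q') < 2 * t := by
        calc dist (p q) (p q') ≤ dist (p q) (hnear q').choose + dist (hnear q').choose (p q') := dist_triangle _ _ _
          _ < t + t := by rw [dist_comm (hnear q').choose (p q')]; linarith
          _ = 2 * t := by ring
      rw [dist_eq_norm] at this
      linarith
    exact hinj.countable
  -- openness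
  have hopen : ∀ q, IsOpen (C q + ball (0:E) t) := fun q => isOpen_ball.add_left
  -- disjointness
  have hdisj : Pairwise (Function.onFun Disjoint fun q => C q + ball (0:E) t) := by
    intro q q' hne
    rw [Function.onFun, Set.disjoint_left]
    rintro x ⟨y, hy, b, hb, rfl⟩ ⟨z, hz, b', hb', hxe⟩
    rw [mem_ball_zero_iff] at hb hb'
    have hyz : y - z = b' - b := by
      have := hxe
      abel_nf at this ⊢
      linear_combination (norm := abel) -this
    have h1 : ‖y - z‖ < 2 * t := by
      rw [hyz]
      calc ‖b' - b‖ ≤ ‖b'‖ + ‖b‖ := norm_sub_le _ _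
        _ < t + t := by linarith
        _ = 2 * t := by ring
    have h2 := hdiff q q' hne y hy z hz
    linarith
  -- main per-cluster estimate
  have hmono : ∀ q, μ (C q + ball (0:E) r) ≤ ENNReal.ofReal (lam ^ n) * μ (C q + ball (0:E) t) := by
    intro q
    have hsub : C q + ball (0:E) r ⊆ ((1 - lam) • p q) +ᵥ (lam • (C q + ball (0:E) t)) := by
      rintro x ⟨y, hy, b, hb, rfl⟩
      rw [mem_ball_zero_iff] at hb
      set w : E := lam⁻¹ • ((1 - lam) • (y - p q) + b) with hwdef
      have hyp : ‖y - p q‖ ≤ s := by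
        have h1 := hlow (p q) (hCS q (hpC q)) y (hCS q hy)
        have h2 := hsame q (p q) (hpC q) y hy
        rw [← norm_sub_rev]
        linarith
      have hwnorm : ‖w‖ < t := by
        have h1 : ‖(1 - lam) • (y - p q) + b‖ ≤ (1 - lam) * ‖y - p q‖ + ‖b‖ := by
          calc ‖(1 - lam) • (y - p q) + b‖ ≤ ‖(1 - lam) • (y - p q)‖ + ‖b‖ := norm_add_le _ _
            _ = (1 - lam) * ‖y - p q‖ + ‖b‖ := by
                rw [norm_smul, Real.norm_eq_abs, abs_of_nonneg (by linarith)]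
        have h2 : (1 - lam) * ‖y - p q‖ + ‖b‖ < lam * t := by
          have h3 : (1 - lam) * ‖y - p q‖ ≤ (1 - lam) * s :=
            mul_le_mul_of_nonneg_left hyp (by linarith)
          linarith
        calc ‖w‖ = lam⁻¹ * ‖(1 - lam) • (y - p q) + b‖ := by
              rw [hwdef, norm_smul, Real.norm_eq_abs, abs_of_pos (inv_pos.2 hlam0)]
          _ < lam⁻¹ * (lam * t) :=
              mul_lt_mul_of_pos_left (lt_of_le_of_lt h1 h2) (inv_pos.2 hlam0)
          _ = t := by rw [← mul_assoc, inv_mul_cancel₀ (ne_of_gt hlam0), one_mul]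
      refine ⟨lam • (y + w), ?_, ?_⟩
      · exact ⟨y + w, ⟨y, hy, w, mem_ball_zero_iff.2 hwnorm, rfl⟩, rfl⟩
      · show (1 - lam) • p q + lam • (y + w) = y + b
        rw [hwdef]
        rw [smul_add, smul_smul, mul_inv_cancel₀ (ne_of_gt hlam0), one_smul]
        module
    calc μ (C q + ball (0:E) r) ≤ μ (((1 - lam) • p q) +ᵥ (lam • (C q + ball (0:E) t))) :=
          measure_mono hsub
      _ = μ (lam • (C q + ball (0:E) t)) := measure_vadd _ _ _
      _ = ENNReal.ofReal (lam ^ n) * μ (C q + ball (0:E) t) := by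
          rw [Measure.addHaar_smul_of_nonneg μ (le_of_lt hlam0), hn]
  -- put it together
  have hcov_r : S + ball (0:E) r = ⋃ q, (C q + ball (0:E) r) := by
    rw [← Set.iUnion_add, hScover]
  have hcov_t : S + ball (0:E) t = ⋃ q, (C q + ball (0:E) t) := by
    rw [← Set.iUnion_add, hScover]
  calc μ (S + ball (0:E) r) = μ (⋃ q, (C q + ball (0:E) r)) := by rw [hcov_r]
    _ ≤ ∑' q, μ (C q + ball (0:E) r) := measure_iUnion_le _
    _ ≤ ∑' q, ENNReal.ofReal (lam ^ n) * μ (C q + ball (0:E) t) := ENNReal.tsum_le_tsum hmono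
    _ = ENNReal.ofReal (lam ^ n) * ∑' q, μ (C q + ball (0:E) t) := ENNReal.tsum_mul_left
    _ = ENNReal.ofReal (lam ^ n) * μ (⋃ q, (C q + ball (0:E) t)) := by
        rw [measure_iUnion hdisj fun q => (hopen q).measurableSet]
    _ = ENNReal.ofReal (lam ^ n) * μ (S + ball (0:E) t) := by rw [hcov_t]
end

section
/- Let ‖·‖ be a norm on ℝⁿ, S ⊆ ℝⁿ, and 0 < r < R. If C is a path-component of S + B°(R), and A = ((S ∩ C) + B°(r)), then C = A + B°(R − r). -/
open Metric Pointwise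

lemma joined_seg {E : Type*} [NormedAddCommGroup E] [NormedSpace ℝ E]
    (S : Set E) (R : ℝ) {s b : E} (hs : s ∈ S) (hb : ‖b‖ < R) :
    JoinedIn (S + ball (0 : E) R) s (s + b) := by
  have hsub : segment ℝ s (s + b) ⊆ S + ball (0 : E) R := by
    intro x hx
    rw [segment_eq_image'] at hx
    obtain ⟨θ, hθ, rfl⟩ := hx
    rw [add_sub_cancel_left]
    refine Set.add_mem_add hs ?_
    rw [mem_ball_zero_iff, norm_smul, Real.norm_eq_abs, abs_of_nonneg hθ.1]
    calc θ * ‖b‖ ≤ 1 * ‖b‖ := by nlinarith [norm_nonneg b, hθ.2]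
    _ < R := by simpa
  have hconv := (convex_segment s (s + b)).isPathConnected ⟨s, left_mem_segment ℝ _ _⟩
  exact (hconv.joinedIn s (left_mem_segment ℝ _ _) _ (right_mem_segment ℝ _ _)).mono hsub

/-- If `C` is a path-component of `S + B°(R)` and `A = (S ∩ C) + B°(r)` with `0 < r < R`,
then `C = A + B°(R - r)`. -/
theorem stmt_8 {E : Type*} [NormedAddCommGroup E] [NormedSpace ℝ E] [FiniteDimensional ℝ E]
    (S : Set E) (r R : ℝ) (hr : 0 < r) (hrR : r < R)
    (C : Set E) (hC : ∃ x ∈ S + ball (0 : E) R, C = pathComponentIn (S + ball (0 : E) R) x) :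
    C = ((S ∩ C) + ball (0 : E) r) + ball (0 : E) (R - r) := by
  obtain ⟨x₀, hx₀, rfl⟩ := hC
  have hR : 0 < R := hr.trans hrR
  ext c
  constructor
  · intro hc
    have hcU : c ∈ S + ball (0 : E) R := pathComponentIn_subset hc
    obtain ⟨s, hs, b, hbb, rfl⟩ := hcU
    rw [mem_ball_zero_iff] at hbb
    have hjoin : JoinedIn (S + ball (0 : E) R) s (s + b) := joined_seg S R hs hbb
    have hsC : s ∈ pathComponentIn (S + ball (0 : E) R) x₀ :=
      (hc : JoinedIn _ x₀ (s + b)).trans hjoin.symm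
    have h1 : (0:ℝ) < r / R := by positivity
    have h2 : (0:ℝ) < 1 - r / R := by
      have : r / R < 1 := (div_lt_one hR).mpr hrR
      linarith
    have heq : s + b = (s + (r / R) • b) + (1 - r / R) • b := by
      rw [add_assoc, ← add_smul]; ring_nf; module
    show s + b ∈ _
    rw [heq]
    refine Set.add_mem_add (Set.add_mem_add ⟨hs, hsC⟩ ?_) ?_
    · rw [mem_ball_zero_iff, norm_smul, Real.norm_eq_abs, abs_of_pos h1]
      calc r / R * ‖b‖ < r / R * R := by exact mul_lt_mul_of_pos_left hbb h1
      _ = r := by field_simp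
    · rw [mem_ball_zero_iff, norm_smul, Real.norm_eq_abs, abs_of_pos h2]
      calc (1 - r / R) * ‖b‖ < (1 - r / R) * R := mul_lt_mul_of_pos_left hbb h2
      _ = R - r := by field_simp
  · rintro ⟨a, ⟨s, ⟨hsS, hsC⟩, b', hb', rfl⟩, d, hd, rfl⟩
    rw [mem_ball_zero_iff] at hb' hd
    have hnorm : ‖b' + d‖ < R := by
      calc ‖b' + d‖ ≤ ‖b'‖ + ‖d‖ := norm_add_le _ _
      _ < r + (R - r) := by linarith
      _ = R := by ring
    have hjoin : JoinedIn (S + ball (0 : E) R) s (s + (b' + d)) := joined_seg S R hsS hnorm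
    show s + b' + d ∈ _
    rw [add_assoc]
    exact (hsC : JoinedIn _ x₀ s).trans hjoin
end

section
/- Every separable ultrametric space embeds isometrically into Hilbert space. -/
open MeasureTheory Set Function
open scoped RealInnerProductSpace ENNReal

noncomputable section

namespace Stmt12

variable {X : Type*} [MetricSpace X] [IsUltrametricDist X]

/-- Half the squared distance; still an ultrametric. -/
def rho (x y : X) : ℝ := dist x y ^ 2 / 2

lemma rho_nonneg (x y : X) : 0 ≤ rho x y := by unfold rho; positivity

lemma rho_comm (x y : X) : rho x y = rho y x := by unfold rho; rw [dist_comm]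

lemma rho_self (x : X) : rho x x = 0 := by simp [rho]

lemma rho_ultra (x y z : X) : rho x z ≤ max (rho x y) (rho y z) := by
  have h := IsUltrametricDist.dist_triangle_max x y z
  unfold rho
  rcases le_total (dist x y) (dist y z) with h' | h'
  · rw [max_eq_right h'] at h
    refine le_max_of_le_right ?_
    have := pow_le_pow_left₀ dist_nonneg h 2
    linarith
  · rw [max_eq_left h'] at h
    refine le_max_of_le_left ?_
    have := pow_le_pow_left₀ dist_nonneg h 2
    linarith

lemma rho_le_of_le {x y : X} {r : ℝ} (z : X) (hxy : rho x y ≤ r) (hxz : rho x z ≤ r) :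
    rho y z ≤ r := by
  refine (rho_ultra y x z).trans (max_le ?_ hxz)
  rw [rho_comm]; exact hxy

lemma dist_sq_eq (x y : X) : rho x y + rho y x = dist x y ^ 2 := by
  unfold rho; rw [dist_comm]; ring

variable (a : ℕ → X)

/-- radii at which `a n` is the least-index dense point in the closed ball around `x`. -/
def R (x : X) (n : ℕ) : Set ℝ := {r | rho x (a n) ≤ r ∧ ∀ m < n, r < rho x (a m)}

lemma measR (x : X) (n : ℕ) : MeasurableSet (R a x n) := by
  have : R a x n = Ici (rho x (a n)) ∩ ⋂ m ∈ Finset.range n, Iio (rho x (a m)) := by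
    ext r
    simp [R, Finset.mem_range]
  rw [this]
  exact measurableSet_Ici.inter
    (Finset.measurableSet_biInter _ (fun m _ => measurableSet_Iio))

lemma R_disjoint (x : X) : Pairwise (Disjoint on R a x) := by
  intro m n hmn
  wlog h : m < n generalizing m n
  · exact (this hmn.symm (hmn.lt_or_gt.resolve_left h)).symm
  rw [Function.onFun, disjoint_left]
  rintro r ⟨hm, -⟩ ⟨-, hn⟩
  exact absurd hm (not_le.2 (hn m h))

lemma mem_R_of_le {x y : X} {r : ℝ} {n : ℕ} (hxy : rho x y ≤ r) (h : r ∈ R a x n) :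
    r ∈ R a y n := by
  refine ⟨rho_le_of_le _ hxy h.1, fun m hm => ?_⟩
  by_contra hc
  push_neg at hc
  have : rho x (a m) ≤ r := by
    rw [rho_comm] at hxy
    exact rho_le_of_le _ hxy hc
  exact absurd this (not_le.2 (h.2 m hm))

lemma not_mem_both {x y : X} {r : ℝ} {n : ℕ} (hr : r < rho x y)
    (hx : r ∈ R a x n) (hy : r ∈ R a y n) : False := by
  have hle : rho x y ≤ r := rho_le_of_le (x := a n) _
    (by rw [rho_comm]; exact hx.1) (by rw [rho_comm]; exact hy.1)
  exact absurd hle (not_le.2 hr)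

lemma exists_mem_R (ha : DenseRange a) (x : X) {r : ℝ} (hr : 0 < r) :
    ∃ n, r ∈ R a x n := by
  have hex : ∃ n, rho x (a n) ≤ r := by
    obtain ⟨n, hy⟩ := Metric.denseRange_iff.1 ha x (Real.sqrt (2 * r))
      (Real.sqrt_pos.2 (by linarith))
    refine ⟨n, ?_⟩
    unfold rho
    nlinarith [Real.sq_sqrt (by linarith : (0:ℝ) ≤ 2 * r), dist_nonneg (x := x) (y := a n),
      Real.sqrt_nonneg (2 * r)]
  classical
  refine ⟨Nat.find hex, Nat.find_spec hex, fun m hm => ?_⟩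
  exact not_le.1 (Nat.find_min hex hm)


lemma A_subset (x y : X) (n : ℕ) : R a x n \ R a y n ⊆ Ico 0 (rho x y) := by
  rintro r ⟨hx, hy⟩
  refine ⟨(rho_nonneg x (a n)).trans hx.1, ?_⟩
  by_contra hc
  push_neg at hc
  exact hy (mem_R_of_le a hc hx)

lemma subset_iUnion_A (ha : DenseRange a) (x y : X) :
    Ioo 0 (rho x y) ⊆ ⋃ n, (R a x n \ R a y n) := by
  intro r hr
  obtain ⟨n, hn⟩ := exists_mem_R a ha x hr.1
  exact mem_iUnion.2 ⟨n, hn, fun hy => not_mem_both a hr.2 hn hy⟩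

lemma tsum_volume_A (ha : DenseRange a) (x y : X) :
    ∑' n, volume (R a x n \ R a y n) = ENNReal.ofReal (rho x y) := by
  rw [← measure_iUnion
    (fun m n hmn => ((R_disjoint a x hmn).mono_left diff_subset).mono_right diff_subset)
    (fun n => (measR a x n).diff (measR a y n))]
  refine le_antisymm ?_ ?_
  · calc volume (⋃ n, (R a x n \ R a y n)) ≤ volume (Ico 0 (rho x y)) :=
        measure_mono (iUnion_subset (A_subset a x y))
      _ = ENNReal.ofReal (rho x y) := by rw [Real.volume_Ico, sub_zero]
  · have h0 : ENNReal.ofReal (rho x y) = volume (Ioo 0 (rho x y)) := by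
      rw [Real.volume_Ioo, sub_zero]
    rw [h0]
    exact measure_mono (subset_iUnion_A a ha x y)

/-- the product measure on `ℕ × ℝ`. -/
def mu : Measure (ℕ × ℝ) := (Measure.count : Measure ℕ).prod volume

/-- region of pairs `(n, r)` where `a n` leads the ball around `x` but not around `y`. -/
def W (x y : X) : Set (ℕ × ℝ) := {p | p.2 ∈ R a x p.1 ∧ p.2 ∉ R a y p.1}

lemma W_eq (x y : X) : W a x y = ⋃ n, ({n} : Set ℕ) ×ˢ (R a x n \ R a y n) := by
  ext ⟨n, r⟩
  simp only [W, mem_iUnion, Set.mem_prod, Set.mem_singleton_iff, Set.mem_setOf_eq,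
    Set.mem_diff]
  constructor
  · rintro ⟨h1, h2⟩; exact ⟨n, rfl, h1, h2⟩
  · rintro ⟨m, rfl, h1, h2⟩; exact ⟨h1, h2⟩

lemma measW (x y : X) : MeasurableSet (W a x y) := by
  rw [W_eq]
  exact MeasurableSet.iUnion fun n =>
    (measurableSet_singleton n).prod ((measR a x n).diff (measR a y n))

lemma volW (ha : DenseRange a) (x y : X) : mu (W a x y) = ENNReal.ofReal (rho x y) := by
  rw [W_eq, measure_iUnion ?_ (fun n =>
    (measurableSet_singleton n).prod ((measR a x n).diff (measR a y n)))]
  · rw [← tsum_volume_A a ha x y]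
    congr 1
    funext n
    rw [mu, Measure.prod_prod, Measure.count_singleton, one_mul]
  · intro m n hmn
    rw [Function.onFun, Set.disjoint_left]
    rintro ⟨k, r⟩ ⟨hk, -⟩ ⟨hk', -⟩
    exact hmn (by simpa using hk.symm.trans hk')

lemma volW_ne_top (ha : DenseRange a) (x y : X) : mu (W a x y) ≠ ⊤ := by
  rw [volW a ha x y]; exact ENNReal.ofReal_ne_top

lemma W_disjoint (x y : X) : Disjoint (W a x y) (W a y x) := by
  rw [Set.disjoint_left]
  rintro p ⟨hx, hy⟩ ⟨hy', -⟩
  exact hy hy'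


variable (ha : DenseRange a)

/-- the indicator of `W x y` as an element of `L²`. -/
def Ind (x y : X) : Lp ℝ 2 (mu : Measure (ℕ × ℝ)) :=
  indicatorConstLp 2 (measW a x y) (volW_ne_top a ha x y) (1 : ℝ)

lemma norm_Ind_sq (x y : X) : ‖Ind a ha x y‖ ^ 2 = rho x y := by
  rw [Ind, norm_indicatorConstLp (by norm_num) (by norm_num)]
  rw [measureReal_def, volW a ha x y, ENNReal.toReal_ofReal (rho_nonneg x y), norm_one, one_mul,
    ← Real.rpow_natCast _ 2, ← Real.rpow_mul (rho_nonneg x y)]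
  norm_num

lemma Ind_coeFn (x y : X) :
    ⇑(Ind a ha x y) =ᵐ[(mu : Measure (ℕ × ℝ))] (W a x y).indicator (fun _ => (1:ℝ)) :=
  indicatorConstLp_coeFn

lemma inner_Ind (x y z w : X) (hd : Disjoint (W a x y) (W a z w)) :
    (inner ℝ (Ind a ha x y) (Ind a ha z w) : ℝ) = 0 := by
  rw [MeasureTheory.L2.inner_def]
  rw [← integral_zero (ℕ × ℝ) ℝ (μ := (mu : Measure (ℕ × ℝ)))]
  refine integral_congr_ae ?_
  filter_upwards [Ind_coeFn a ha x y, Ind_coeFn a ha z w] with p h1 h2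
  rw [RCLike.inner_apply, h1, h2]
  by_cases hp : p ∈ W a x y
  · have hq : p ∉ W a z w := fun hc => (Set.disjoint_left.1 hd) hp hc
    simp [Set.indicator_of_notMem hq]
  · simp [Set.indicator_of_notMem hp]

/-- the embedding into `L²`. -/
def emb (x : X) : Lp ℝ 2 (mu : Measure (ℕ × ℝ)) := Ind a ha x (a 0) - Ind a ha (a 0) x

lemma emb_sub (x y : X) : emb a ha x - emb a ha y = Ind a ha x y - Ind a ha y x := by
  unfold emb
  refine Lp.ext ?_
  filter_upwards [Lp.coeFn_sub (Ind a ha x (a 0) - Ind a ha (a 0) x)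
      (Ind a ha y (a 0) - Ind a ha (a 0) y),
    Lp.coeFn_sub (Ind a ha x (a 0)) (Ind a ha (a 0) x),
    Lp.coeFn_sub (Ind a ha y (a 0)) (Ind a ha (a 0) y),
    Lp.coeFn_sub (Ind a ha x y) (Ind a ha y x),
    Ind_coeFn a ha x (a 0), Ind_coeFn a ha (a 0) x, Ind_coeFn a ha y (a 0),
    Ind_coeFn a ha (a 0) y, Ind_coeFn a ha x y, Ind_coeFn a ha y x] with p e1 e2 e3 e4
    e5 e6 e7 e8 e9 e10
  rw [e1, e4]
  simp only [Pi.sub_apply]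
  rw [e2, e3]
  simp only [Pi.sub_apply]
  rw [e5, e6, e7, e8, e9, e10]
  classical
  simp only [W, Set.indicator_apply, Set.mem_setOf_eq]
  by_cases hx : p.2 ∈ R a x p.1 <;> by_cases hy : p.2 ∈ R a y p.1 <;>
    by_cases hz : p.2 ∈ R a (a 0) p.1 <;> simp [hx, hy, hz]

lemma norm_emb_sub (x y : X) : ‖emb a ha x - emb a ha y‖ = dist x y := by
  have hsq : ‖emb a ha x - emb a ha y‖ ^ 2 = dist x y ^ 2 := by
    rw [emb_sub, norm_sub_sq_real, inner_Ind a ha x y y x (W_disjoint a x y),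
      norm_Ind_sq, norm_Ind_sq, ← dist_sq_eq]
    ring
  have h1 : (0:ℝ) ≤ ‖emb a ha x - emb a ha y‖ := norm_nonneg _
  nlinarith [dist_nonneg (x := x) (y := y)]

lemma isometry_emb : Isometry (emb a ha) :=
  Isometry.of_dist_eq fun x y => by rw [dist_eq_norm, norm_emb_sub]

lemma memlp_extend {ι : Type*} {k : ι → ℕ} (hk : Function.Injective k)
    (f : lp (fun _ : ι => ℝ) 2) : Memℓp (Function.extend k (⇑f) 0) 2 := by
  apply memℓp_gen
  have h2 : ((2 : ℝ≥0∞).toReal) = (2 : ℝ) := by norm_num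
  have key : (fun n => ‖Function.extend k (⇑f) 0 n‖ ^ ((2:ℝ≥0∞).toReal))
      = Function.extend k (fun i => ‖f i‖ ^ ((2:ℝ≥0∞).toReal)) 0 := by
    funext n
    by_cases h : ∃ i, k i = n
    · obtain ⟨i, rfl⟩ := h
      rw [hk.extend_apply, hk.extend_apply]
    · rw [Function.extend_apply' _ _ _ h, Function.extend_apply' _ _ _ h]
      simp only [Pi.zero_apply, norm_zero]
      rw [h2, Real.zero_rpow (by norm_num)]
  rw [key, summable_extend_zero hk]
  exact (lp.memℓp f).summable (by rw [h2]; norm_num)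

/-- extension by zero along an injection, as a map of `ℓ²` spaces. -/
def extendLp {ι : Type*} {k : ι → ℕ} (hk : Function.Injective k)
    (f : lp (fun _ : ι => ℝ) 2) : lp (fun _ : ℕ => ℝ) 2 :=
  ⟨Function.extend k (⇑f) 0, memlp_extend hk f⟩

lemma extendLp_sub {ι : Type*} {k : ι → ℕ} (hk : Function.Injective k)
    (f g : lp (fun _ : ι => ℝ) 2) :
    extendLp hk f - extendLp hk g = extendLp hk (f - g) := by
  apply Subtype.ext
  funext n
  have h1 : (⇑(extendLp hk f - extendLp hk g) : ℕ → ℝ) n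
      = extendLp hk f n - extendLp hk g n := by
    rw [lp.coeFn_sub]; rfl
  rw [h1]
  show Function.extend k (⇑f) 0 n - Function.extend k (⇑g) 0 n
      = Function.extend k (⇑(f - g)) 0 n
  by_cases h : ∃ i, k i = n
  · obtain ⟨i, rfl⟩ := h
    rw [hk.extend_apply, hk.extend_apply, hk.extend_apply, lp.coeFn_sub, Pi.sub_apply]
  · rw [Function.extend_apply' _ _ _ h, Function.extend_apply' _ _ _ h,
      Function.extend_apply' _ _ _ h]
    simp

lemma norm_extendLp {ι : Type*} {k : ι → ℕ} (hk : Function.Injective k)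
    (f : lp (fun _ : ι => ℝ) 2) : ‖extendLp hk f‖ = ‖f‖ := by
  have hp : 0 < ((2:ℝ≥0∞)).toReal := by norm_num
  rw [lp.norm_eq_tsum_rpow hp, lp.norm_eq_tsum_rpow hp]
  congr 1
  have key : (fun n => ‖(extendLp hk f) n‖ ^ ((2:ℝ≥0∞).toReal))
      = Function.extend k (fun i => ‖f i‖ ^ ((2:ℝ≥0∞).toReal)) 0 := by
    funext n
    show ‖Function.extend k (⇑f) 0 n‖ ^ ((2:ℝ≥0∞).toReal) = _
    by_cases h : ∃ i, k i = n
    · obtain ⟨i, rfl⟩ := h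
      rw [hk.extend_apply, hk.extend_apply]
    · rw [Function.extend_apply' _ _ _ h, Function.extend_apply' _ _ _ h]
      simp only [Pi.zero_apply, norm_zero]
      rw [Real.zero_rpow (by norm_num)]
  rw [key, tsum_extend_zero hk]

lemma isometry_extendLp {ι : Type*} {k : ι → ℕ} (hk : Function.Injective k) :
    Isometry (extendLp (ι := ι) hk) :=
  Isometry.of_dist_eq fun f g => by
    rw [dist_eq_norm, dist_eq_norm, extendLp_sub, norm_extendLp]

/-- Any second-countable real Hilbert space embeds isometrically in `ℓ²(ℕ, ℝ)`. -/
lemma exists_isometry_hilbert (H : Type*) [NormedAddCommGroup H] [InnerProductSpace ℝ H]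
    [CompleteSpace H] [SecondCountableTopology H] :
    ∃ T : H → lp (fun _ : ℕ => ℝ) 2, Isometry T := by
  obtain ⟨w, b, hb⟩ := exists_hilbertBasis ℝ H
  have ho : Orthonormal ℝ ((↑) : w → H) := by rw [← hb]; exact b.orthonormal
  have hdist : ∀ i j : w, i ≠ j → dist (i : H) (j : H) = Real.sqrt 2 := by
    intro i j hij
    have h1 : ‖(i : H) - (j : H)‖ ^ 2 = 2 := by
      rw [norm_sub_sq_real, ho.1 i, ho.1 j, ho.2 hij]
      norm_num
    rw [dist_eq_norm, ← Real.sqrt_sq (norm_nonneg ((i:H) - j)), h1]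
  have hcount : Countable w := by
    refine Pairwise.countable_of_isOpen_disjoint
      (s := fun i : w => Metric.ball (i : H) (1/2)) ?_ (fun i => Metric.isOpen_ball)
      (fun i => Metric.nonempty_ball.2 (by norm_num))
    intro i j hij
    apply Metric.ball_disjoint_ball
    rw [hdist i j hij]
    nlinarith [Real.sq_sqrt (by norm_num : (2:ℝ) ≥ 0), Real.sqrt_nonneg 2]
  obtain ⟨k, hk⟩ := exists_injective_nat w
  exact ⟨fun v => extendLp hk (b.repr v),
    (isometry_extendLp hk).comp b.repr.isometry⟩

end Stmt12

end

/-- Every separable ultrametric space embeds isometrically into the separable Hilbert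
space `ℓ²(ℕ, ℝ)`. -/
theorem stmt_12 {X : Type*} [MetricSpace X] [IsUltrametricDist X]
    [TopologicalSpace.SeparableSpace X] :
    ∃ f : X → lp (fun _ : ℕ => ℝ) 2, Isometry f := by
  classical
  cases isEmpty_or_nonempty X with
  | inl h => exact ⟨fun x => isEmptyElim x, fun x => isEmptyElim x⟩
  | inr h =>
    have ha : DenseRange (TopologicalSpace.denseSeq X) :=
      TopologicalSpace.denseRange_denseSeq X
    haveI : Fact ((2 : ENNReal) ≠ ⊤) := ⟨by norm_num⟩
    haveI : MeasureTheory.SFinite (MeasureTheory.Measure.count : MeasureTheory.Measure ℕ) :=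
      inferInstanceAs (MeasureTheory.SFinite
        (MeasureTheory.Measure.sum (fun n : ℕ => MeasureTheory.Measure.dirac n)))
    haveI : MeasureTheory.IsSeparable (Stmt12.mu : MeasureTheory.Measure (ℕ × ℝ)) :=
      inferInstanceAs (MeasureTheory.IsSeparable
        ((MeasureTheory.Measure.count : MeasureTheory.Measure ℕ).prod
          MeasureTheory.volume))
    obtain ⟨T, hT⟩ := Stmt12.exists_isometry_hilbert
      (MeasureTheory.Lp ℝ 2 (Stmt12.mu : MeasureTheory.Measure (ℕ × ℝ)))
    exact ⟨fun x => T (Stmt12.emb (TopologicalSpace.denseSeq X) ha x),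
      hT.comp (Stmt12.isometry_emb (TopologicalSpace.denseSeq X) ha)⟩
end

section
/- Let ‖·‖ be a norm on ℝⁿ, D ≥ 1, and S ⊆ ℝⁿ a set with ultrametric distortion at most D. Then the Assouad dimension of S is at most (1 − 1/(2(D+1)))·n. -/
open Metric Module
open scoped ENNReal

/-- The Assouad dimension of a (pseudo)metric space: the infimum of all exponents `β ≥ 0`
such that for some constant `C > 0`, every ball of radius `R` can be covered by at most
`C (R/r)^β` balls of radius `r`, for all `0 < r < R`. (Infimum in `ℝ≥0∞`; it is `⊤` if no
such `β` exists.) -/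
noncomputable def assouadDim (X : Type*) [PseudoMetricSpace X] : ℝ≥0∞ :=
  sInf { b : ℝ≥0∞ | ∃ β : ℝ, b = ENNReal.ofReal β ∧ 0 ≤ β ∧ ∃ C : ℝ, 0 < C ∧
    ∀ (x : X) (R r : ℝ), 0 < r → r < R →
      ∃ T : Finset X, (T.card : ℝ) ≤ C * (R / r) ^ β ∧
        ball x R ⊆ ⋃ y ∈ T, ball y r }

section Aux

open MeasureTheory Set

variable {E : Type*} [NormedAddCommGroup E] [NormedSpace ℝ E] [FiniteDimensional ℝ E]
  [MeasurableSpace E] [BorelSpace E]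

/-- AM-GM based key inequality: for `x ≥ 1`, `(2D+1) x^(1/(2(D+1))) ≤ 2D + x`. -/
private lemma amgm_key {D x : ℝ} (hD : 1 ≤ D) (hx : 1 ≤ x) :
    (2*D+1) * x ^ ((1:ℝ)/(2*(D+1))) ≤ 2*D + x := by
  have h2D : (0:ℝ) < 2*(D+1) := by linarith
  set θ : ℝ := 1/(2*(D+1)) with hθ
  have hθ0 : 0 ≤ θ := by positivity
  have hθ1 : θ ≤ 1 := by
    rw [hθ, div_le_one h2D]; linarith
  have hAM : x ^ θ * 1 ^ (1-θ) ≤ θ * x + (1-θ) * 1 :=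
    Real.geom_mean_le_arith_mean2_weighted hθ0 (by linarith) (by linarith) zero_le_one (by ring)
  rw [Real.one_rpow, mul_one, mul_one] at hAM
  have hθv : θ * (2*(D+1)) = 1 := by
    rw [hθ]; field_simp
  nlinarith [mul_le_mul_of_nonneg_left hAM (by linarith : (0:ℝ) ≤ 2*D+1),
    mul_nonneg hθ0 (sub_nonneg.mpr hx)]

/-- Star-shaped scaling: if all points of `Y` are within `L` of `y₀`, then enlarging the
radius of the balls from `s` to `t` multiplies the measure by at least `((L+t)/(L+s))^n`. -/
private lemma star_scale (μ : Measure E) [μ.IsAddHaarMeasure]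
    (Y : Finset E) (y₀ : E) {L s t : ℝ} (hL : 0 ≤ L) (hs : 0 < s) (hst : s ≤ t)
    (hY : ∀ y ∈ Y, dist y y₀ ≤ L) :
    ENNReal.ofReal (((L + t) / (L + s)) ^ (finrank ℝ E)) * μ (⋃ y ∈ Y, ball y s)
      ≤ μ (⋃ y ∈ Y, ball y t) := by
  set c : ℝ := (L + t) / (L + s) with hc
  have hLs : 0 < L + s := by linarith
  have hc1 : 1 ≤ c := by rw [hc, le_div_iff₀ hLs]; linarith
  have hc0 : 0 < c := lt_of_lt_of_le one_pos hc1
  have hkey : c * (L + s) = L + t := by rw [hc]; field_simp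
  have himg : (AffineMap.homothety y₀ c) '' (⋃ y ∈ Y, ball y s) ⊆ ⋃ y ∈ Y, ball y t := by
    rintro w hw
    obtain ⟨z, hz, rfl⟩ := hw
    simp only [Set.mem_iUnion, mem_ball] at hz ⊢
    obtain ⟨y, hyY, hzy⟩ := hz
    refine ⟨y, hyY, ?_⟩
    have hrw : AffineMap.homothety y₀ c z - y = c • (z - y) + (c - 1) • (y - y₀) := by
      simp only [AffineMap.homothety_apply, vsub_eq_sub, vadd_eq_add, smul_sub, sub_smul, one_smul]
      abel
    have hb : dist (AffineMap.homothety y₀ c z) y ≤ c * dist z y + (c-1) * dist y y₀ := by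
      rw [dist_eq_norm, hrw, dist_eq_norm, dist_eq_norm]
      refine le_trans (norm_add_le _ _) ?_
      rw [norm_smul, norm_smul, Real.norm_eq_abs, Real.norm_eq_abs, abs_of_pos hc0,
        abs_of_nonneg (by linarith : (0:ℝ) ≤ c - 1)]
    have h1 : c * dist z y < c * s := (mul_lt_mul_iff_right₀ hc0).mpr hzy
    have h2 : (c-1) * dist y y₀ ≤ (c-1) * L :=
      mul_le_mul_of_nonneg_left (hY y hyY) (by linarith)
    have : dist (AffineMap.homothety y₀ c z) y < c * s + (c-1) * L := by linarith
    have hcs : c * s + (c-1) * L = t := by linarith [hkey]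
    linarith [this, hcs]
  calc ENNReal.ofReal (c ^ (finrank ℝ E)) * μ (⋃ y ∈ Y, ball y s)
      = μ ((AffineMap.homothety y₀ c) '' (⋃ y ∈ Y, ball y s)) := by
        rw [Measure.addHaar_image_homothety, abs_of_pos (pow_pos hc0 _)]
    _ ≤ μ (⋃ y ∈ Y, ball y t) := measure_mono himg

/-- The main induction: volume lower bound for `r`-separated subsets of `S` whose
`ρ`-diameter is at most `τ`. -/
lemma claimA (μ : Measure E) [μ.IsAddHaarMeasure]
    (S : Set E) (ρ : E → E → ℝ) (D : ℝ) (hD : 1 ≤ D)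
    (hultra : ∀ x ∈ S, ∀ y ∈ S, ∀ z ∈ S, ρ x y ≤ max (ρ x z) (ρ z y))
    (hlow : ∀ x ∈ S, ∀ y ∈ S, ‖x - y‖ ≤ ρ x y)
    (hup : ∀ x ∈ S, ∀ y ∈ S, ρ x y ≤ D * ‖x - y‖)
    (r : ℝ) (hr : 0 < r) :
    ∀ (m : ℕ) (Y : Finset E), Y.card ≤ m → Y.Nonempty → ↑Y ⊆ S →
      (∀ p ∈ Y, ∀ q ∈ Y, p ≠ q → r ≤ dist p q) →
      ∀ τ : ℝ, r ≤ τ → (∀ p ∈ Y, ∀ q ∈ Y, ρ p q ≤ τ) →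
      (Y.card : ℝ≥0∞) * (ENNReal.ofReal ((r/(2*D))^(finrank ℝ E)) * μ (ball 0 1)) *
          ENNReal.ofReal ((τ/r) ^ ((1/(2*(D+1))) * (finrank ℝ E : ℝ)))
        ≤ μ (⋃ y ∈ Y, ball (y:E) (τ/(2*D))) := by
  classical
  have hD0 : (0:ℝ) < D := by linarith
  have h2D : (0:ℝ) < 2*D := by linarith
  set ν : ℕ := finrank ℝ E with hνdef
  set θ : ℝ := 1/(2*(D+1)) with hθdef
  have hθ0 : 0 ≤ θ := by positivity
  have hθ1 : θ ≤ 1 := by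
    rw [hθdef, div_le_one (by linarith)]; linarith
  intro m
  induction m with
  | zero =>
    intro Y hcard hne _ _ _ _ _
    have := Finset.card_pos.mpr hne
    omega
  | succ m IH =>
    intro Y hcard hne hYS hsep τ hrτ hρτ
    have hτ0 : 0 < τ := lt_of_lt_of_le hr hrτ
    by_cases hc : Y.card ≤ m
    · exact IH Y hc hne hYS hsep τ hrτ hρτ
    have hcard' : Y.card = m + 1 := le_antisymm hcard (by omega)
    by_cases h1 : Y.card = 1
    · -- base case: a single point
      obtain ⟨y, hy⟩ := Finset.card_eq_one.mp h1
      subst hy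
      have hτ2D : 0 < τ/(2*D) := by positivity
      have hball : (⋃ z ∈ ({y} : Finset E), ball (z:E) (τ/(2*D))) = ball y (τ/(2*D)) := by
        simp
      rw [hball, Measure.addHaar_ball_of_pos μ y hτ2D]
      have hreal : (r/(2*D))^ν * (τ/r) ^ (θ * (ν:ℝ)) ≤ (τ/(2*D))^ν := by
        have hbase : 1 ≤ τ/r := (one_le_div hr).mpr hrτ
        have h1' : (τ/r) ^ (θ * (ν:ℝ)) ≤ (τ/r) ^ ((ν:ℝ)) := by
          apply Real.rpow_le_rpow_of_exponent_le hbase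
          nlinarith [Nat.cast_nonneg (α := ℝ) ν]
        have h2' : (τ/r) ^ ((ν:ℝ)) = (τ/r)^ν := Real.rpow_natCast _ ν
        have h3' : (r/(2*D))^ν * (τ/r)^ν = (τ/(2*D))^ν := by
          rw [← mul_pow]; congr 1; field_simp
        calc (r/(2*D))^ν * (τ/r) ^ (θ * (ν:ℝ))
            ≤ (r/(2*D))^ν * (τ/r)^ν := by
              rw [← h2']
              exact mul_le_mul_of_nonneg_left h1' (by positivity)
          _ = (τ/(2*D))^ν := h3'
      calc (((({y} : Finset E).card : ℕ)) : ℝ≥0∞) *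
            (ENNReal.ofReal ((r/(2*D))^ν) * μ (ball 0 1)) *
            ENNReal.ofReal ((τ/r) ^ (θ * (ν:ℝ)))
          = ENNReal.ofReal ((r/(2*D))^ν * (τ/r) ^ (θ * (ν:ℝ))) * μ (ball 0 1) := by
            rw [Finset.card_singleton, Nat.cast_one, one_mul,
              ENNReal.ofReal_mul (by positivity)]
            ring
        _ ≤ ENNReal.ofReal ((τ/(2*D))^ν) * μ (ball 0 1) := by
            exact mul_le_mul_left (ENNReal.ofReal_le_ofReal hreal) _
    · -- main case: at least two points; split at the top of the ultrametric tree
      have h2 : 1 < Y.card := by omega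
      have hneP : (Y ×ˢ Y).Nonempty := hne.product hne
      set Δ : ℝ := (Y ×ˢ Y).sup' hneP (fun pq => ρ pq.1 pq.2) with hΔdef
      have hΔle : ∀ p ∈ Y, ∀ q ∈ Y, ρ p q ≤ Δ := by
        intro p hp q hq
        exact Finset.le_sup' (f := fun pq : E × E => ρ pq.1 pq.2)
          (b := (p, q)) (Finset.mem_product.mpr ⟨hp, hq⟩)
      have hΔτ : Δ ≤ τ := by
        apply Finset.sup'_le
        intro pq hpq
        obtain ⟨h1', h2'⟩ := Finset.mem_product.mp hpq
        exact hρτ _ h1' _ h2'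
      have hrΔ : r ≤ Δ := by
        obtain ⟨a, ha, b, hb, hab⟩ := Finset.one_lt_card.mp h2
        calc r ≤ dist a b := hsep a ha b hb hab
          _ = ‖a - b‖ := dist_eq_norm a b
          _ ≤ ρ a b := hlow a (hYS ha) b (hYS hb)
          _ ≤ Δ := hΔle a ha b hb
      have hΔ0 : 0 < Δ := lt_of_lt_of_le hr hrΔ
      -- a pair attaining the sup
      obtain ⟨pq, hpqmem, hpqeq⟩ := Finset.exists_mem_eq_sup' hneP (fun pq => ρ pq.1 pq.2)
      obtain ⟨ha₀, hb₀⟩ := Finset.mem_product.mp hpqmem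
      set a₀ : E := pq.1
      set b₀ : E := pq.2
      have hρ00 : ∀ x ∈ S, ρ x x = 0 := by
        intro x hx
        have hu := hup x hx x hx
        have hl := hlow x hx x hx
        simp only [sub_self, norm_zero, mul_zero] at hu hl
        linarith
      have hab : a₀ ≠ b₀ := by
        intro h
        rw [h] at hpqeq
        rw [hρ00 b₀ (hYS hb₀)] at hpqeq
        linarith [hrΔ, hr, hpqeq]
      -- the binary split
      set P : E → Prop := fun y => y = a₀ ∨ ρ a₀ y < Δ with hPdef
      set Y₁ : Finset E := Y.filter P with hY₁def
      set Y₂ : Finset E := Y.filter (fun y => ¬ P y) with hY₂def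
      have ha₀1 : a₀ ∈ Y₁ := Finset.mem_filter.mpr ⟨ha₀, Or.inl rfl⟩
      have hb₀2 : b₀ ∈ Y₂ := by
        refine Finset.mem_filter.mpr ⟨hb₀, ?_⟩
        rintro (h | h)
        · exact hab h.symm
        · rw [← hpqeq] at h; exact lt_irrefl _ h
      have hY₁sub : Y₁ ⊆ Y := Finset.filter_subset _ _
      have hY₂sub : Y₂ ⊆ Y := Finset.filter_subset _ _
      have hcards : Y₁.card + Y₂.card = Y.card := Finset.card_filter_add_card_filter_not P
      have hY₁c : Y₁.card ≤ m := by
        have : 1 ≤ Y₂.card := Finset.card_pos.mpr ⟨b₀, hb₀2⟩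
        omega
      have hY₂c : Y₂.card ≤ m := by
        have : 1 ≤ Y₁.card := Finset.card_pos.mpr ⟨a₀, ha₀1⟩
        omega
      -- cross separation
      have hcross : ∀ p ∈ Y₁, ∀ q ∈ Y₂, Δ ≤ ρ p q := by
        intro p hp q hq
        obtain ⟨hpY, hpP⟩ := Finset.mem_filter.mp hp
        obtain ⟨hqY, hqP⟩ := Finset.mem_filter.mp hq
        simp only [hPdef] at hqP
        push_neg at hqP
        obtain ⟨hqa, hqρ⟩ := hqP
        rcases hpP with rfl | hpρ
        · exact hqρ
        · have hu := hultra a₀ (hYS ha₀) q (hYS hqY) p (hYS hpY)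
          rcases le_max_iff.mp hu with h | h
          · linarith
          · linarith
      have hcrossd : ∀ p ∈ Y₁, ∀ q ∈ Y₂, Δ/D ≤ dist p q := by
        intro p hp q hq
        have h1' := hcross p hp q hq
        have h2' := hup p (hYS (hY₁sub hp)) q (hYS (hY₂sub hq))
        rw [div_le_iff₀ hD0]
        rw [dist_eq_norm]
        nlinarith
      -- apply the inductive hypothesis to both halves at scale Δ
      have I₁ := IH Y₁ hY₁c ⟨a₀, ha₀1⟩ (Set.Subset.trans (Finset.coe_subset.mpr hY₁sub) hYS)
        (fun p hp q hq h => hsep p (hY₁sub hp) q (hY₁sub hq) h) Δ hrΔ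
        (fun p hp q hq => hΔle p (hY₁sub hp) q (hY₁sub hq))
      have I₂ := IH Y₂ hY₂c ⟨b₀, hb₀2⟩ (Set.Subset.trans (Finset.coe_subset.mpr hY₂sub) hYS)
        (fun p hp q hq h => hsep p (hY₂sub hp) q (hY₂sub hq) h) Δ hrΔ
        (fun p hp q hq => hΔle p (hY₂sub hp) q (hY₂sub hq))
      -- disjointness of the two neighborhoods at radius Δ/(2D)
      have hΔ2D : 0 < Δ/(2*D) := by positivity
      have hdisj : Disjoint (⋃ y ∈ Y₁, ball (y:E) (Δ/(2*D))) (⋃ y ∈ Y₂, ball (y:E) (Δ/(2*D))) := by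
        rw [Set.disjoint_left]
        rintro z hz1 hz2
        simp only [Set.mem_iUnion, mem_ball] at hz1 hz2
        obtain ⟨p, hp, hzp⟩ := hz1
        obtain ⟨q, hq, hzq⟩ := hz2
        have h1' := hcrossd p hp q hq
        have h2' : dist p q ≤ dist p z + dist z q := dist_triangle p z q
        have h3' : dist p z = dist z p := dist_comm p z
        have h4' : Δ/(2*D) + Δ/(2*D) = Δ/D := by field_simp; ring
        linarith
      have hunion : (⋃ y ∈ Y, ball (y:E) (Δ/(2*D)))
          = (⋃ y ∈ Y₁, ball (y:E) (Δ/(2*D))) ∪ (⋃ y ∈ Y₂, ball (y:E) (Δ/(2*D))) := by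
        conv_lhs => rw [← Finset.filter_union_filter_not_eq P Y]
        exact Finset.set_biUnion_union _ _ _
      have hmeas : MeasurableSet (⋃ y ∈ Y₂, ball (y:E) (Δ/(2*D))) :=
        (isOpen_biUnion (fun i _ => isOpen_ball)).measurableSet
      have hsum : μ (⋃ y ∈ Y, ball (y:E) (Δ/(2*D)))
          = μ (⋃ y ∈ Y₁, ball (y:E) (Δ/(2*D))) + μ (⋃ y ∈ Y₂, ball (y:E) (Δ/(2*D))) := by
        rw [hunion, measure_union hdisj hmeas]
      -- combine
      have hcomb : (Y.card : ℝ≥0∞) * (ENNReal.ofReal ((r/(2*D))^ν) * μ (ball 0 1)) *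
          ENNReal.ofReal ((Δ/r) ^ (θ * (ν:ℝ)))
          ≤ μ (⋃ y ∈ Y, ball (y:E) (Δ/(2*D))) := by
        rw [hsum, ← hcards]
        push_cast
        rw [add_mul, add_mul]
        exact add_le_add I₁ I₂
      -- upgrade from scale Δ to scale τ via star-shaped scaling
      set c : ℝ := (Δ + τ/(2*D)) / (Δ + Δ/(2*D)) with hcdef
      have hx1 : 1 ≤ τ/Δ := (one_le_div hΔ0).mpr hΔτ
      have hkey2 : (τ/Δ) ^ θ ≤ c := by
        have hxkey := amgm_key hD hx1
        rw [hθdef]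
        rw [hcdef, le_div_iff₀ (by positivity)]
        have e1 : (2*D+1) * (Δ/(2*D)) = Δ + Δ/(2*D) := by field_simp
        have e2 : (2*D + τ/Δ) * (Δ/(2*D)) = Δ + τ/(2*D) := by field_simp
        have h3 : (2*D+1) * ((τ/Δ) ^ ((1:ℝ)/(2*(D+1)))) * (Δ/(2*D))
            = (τ/Δ) ^ ((1:ℝ)/(2*(D+1))) * (Δ + Δ/(2*D)) := by rw [← e1]; ring
        nlinarith [mul_le_mul_of_nonneg_right hxkey (le_of_lt hΔ2D)]
      have hst' : Δ/(2*D) ≤ τ/(2*D) := by gcongr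
      have hstar := star_scale μ Y a₀ (le_of_lt hΔ0) hΔ2D hst'
        (fun y hy => by
          rw [dist_eq_norm]
          exact le_trans (hlow y (hYS hy) a₀ (hYS ha₀)) (hΔle y hy a₀ ha₀))
      have hτr : (τ/r) = (Δ/r) * (τ/Δ) := by field_simp
      have hXsplit : (τ/r) ^ (θ*(ν:ℝ)) = (Δ/r) ^ (θ*(ν:ℝ)) * (τ/Δ) ^ (θ*(ν:ℝ)) := by
        rw [hτr, Real.mul_rpow (by positivity) (by positivity)]
      have hcν : (τ/Δ) ^ (θ*(ν:ℝ)) ≤ c^ν := by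
        have hpow : (τ/Δ) ^ (θ*(ν:ℝ)) = ((τ/Δ)^θ)^ν := by
          rw [← Real.rpow_natCast ((τ/Δ)^θ) ν, ← Real.rpow_mul (by positivity)]
        rw [hpow]
        exact pow_le_pow_left₀ (Real.rpow_nonneg (by positivity) _) hkey2 ν
      calc (Y.card : ℝ≥0∞) * (ENNReal.ofReal ((r/(2*D))^ν) * μ (ball 0 1)) *
            ENNReal.ofReal ((τ/r) ^ (θ*(ν:ℝ)))
          = ((Y.card : ℝ≥0∞) * (ENNReal.ofReal ((r/(2*D))^ν) * μ (ball 0 1)) *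
              ENNReal.ofReal ((Δ/r) ^ (θ*(ν:ℝ)))) * ENNReal.ofReal ((τ/Δ) ^ (θ*(ν:ℝ))) := by
            rw [hXsplit, ENNReal.ofReal_mul (by positivity)]
            ring
        _ ≤ μ (⋃ y ∈ Y, ball (y:E) (Δ/(2*D))) * ENNReal.ofReal ((τ/Δ) ^ (θ*(ν:ℝ))) :=
            mul_le_mul_left hcomb _
        _ ≤ μ (⋃ y ∈ Y, ball (y:E) (Δ/(2*D))) * ENNReal.ofReal (c^ν) :=
            mul_le_mul_right (ENNReal.ofReal_le_ofReal hcν) _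
        _ = ENNReal.ofReal (c^ν) * μ (⋃ y ∈ Y, ball (y:E) (Δ/(2*D))) := mul_comm _ _
        _ ≤ μ (⋃ y ∈ Y, ball (y:E) (τ/(2*D))) := hstar


/-- Real-number bookkeeping for the final count. -/
private lemma helper_count {N q rr DD θ : ℝ} {ν : ℕ} (hN : 0 ≤ N) (hq : 1 ≤ q) (hDD : 1 ≤ DD)
    (hrr : 0 < rr) (hθ0 : 0 ≤ θ)
    (H : N * ((rr/(2*DD))^ν * q ^ (θ * (ν:ℝ))) ≤ (2*(q*rr))^ν) :
    N ≤ (4*DD)^ν * q ^ ((1-θ) * (ν:ℝ)) := by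
  have hq0 : 0 < q := lt_of_lt_of_le one_pos hq
  have hDD0 : (0:ℝ) < DD := by linarith
  have e : (2*(q*rr))^ν = ((4*DD)^ν * q^ν) * (rr/(2*DD))^ν := by
    rw [← mul_pow, ← mul_pow]; congr 1; field_simp; ring
  rw [e] at H
  have hrr2 : (0:ℝ) < (rr/(2*DD))^ν := by positivity
  have H2 : N * q ^ (θ*(ν:ℝ)) ≤ (4*DD)^ν * q^ν := by
    have H' : (N * q ^ (θ*(ν:ℝ))) * (rr/(2*DD))^ν ≤ ((4*DD)^ν * q^ν) * (rr/(2*DD))^ν := by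
      calc (N * q ^ (θ*(ν:ℝ))) * (rr/(2*DD))^ν
          = N * ((rr/(2*DD))^ν * q ^ (θ*(ν:ℝ))) := by ring
        _ ≤ ((4*DD)^ν * q^ν) * (rr/(2*DD))^ν := H
    exact le_of_mul_le_mul_right H' hrr2
  have e2 : (q:ℝ)^ν = q ^ ((1-θ)*(ν:ℝ)) * q ^ (θ*(ν:ℝ)) := by
    rw [← Real.rpow_natCast q ν, ← Real.rpow_add hq0]
    congr 1; ring
  rw [e2] at H2
  have hqθ : (0:ℝ) < q ^ (θ*(ν:ℝ)) := Real.rpow_pos_of_pos hq0 _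
  have H3 : N * q ^ (θ*(ν:ℝ)) ≤ ((4*DD)^ν * q ^ ((1-θ)*(ν:ℝ))) * q ^ (θ*(ν:ℝ)) := by
    calc N * q ^ (θ*(ν:ℝ)) ≤ (4*DD)^ν * (q ^ ((1-θ)*(ν:ℝ)) * q ^ (θ*(ν:ℝ))) := H2
      _ = ((4*DD)^ν * q ^ ((1-θ)*(ν:ℝ))) * q ^ (θ*(ν:ℝ)) := by ring
  exact le_of_mul_le_mul_right H3 hqθ


end Aux

open MeasureTheory Set in
/-- If `S ⊆ ℝⁿ` (an `n`-dimensional real normed space) admits an ultrametric `ρ` with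
`‖x-y‖ ≤ ρ(x,y) ≤ D‖x-y‖` on `S`, then the Assouad dimension of `S` is at most
`(1 - 1/(2(D+1))) n`. -/
theorem stmt_18 {E : Type*} [NormedAddCommGroup E] [NormedSpace ℝ E] [FiniteDimensional ℝ E]
    (n : ℕ) (hn : finrank ℝ E = n) (D : ℝ) (hD : 1 ≤ D)
    (S : Set E) (ρ : E → E → ℝ)
    (hsymm : ∀ x ∈ S, ∀ y ∈ S, ρ x y = ρ y x)
    (hultra : ∀ x ∈ S, ∀ y ∈ S, ∀ z ∈ S, ρ x y ≤ max (ρ x z) (ρ z y))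
    (hlow : ∀ x ∈ S, ∀ y ∈ S, ‖x - y‖ ≤ ρ x y)
    (hup : ∀ x ∈ S, ∀ y ∈ S, ρ x y ≤ D * ‖x - y‖) :
    assouadDim S ≤ ENNReal.ofReal ((1 - 1 / (2 * (D + 1))) * n) := by
  classical
  letI : MeasurableSpace E := borel E
  haveI : BorelSpace E := ⟨rfl⟩
  set μ : Measure E := (Module.finBasis ℝ E).addHaar with hμdef
  have hD0 : (0:ℝ) < D := by linarith
  have h2D : (0:ℝ) < 2*D := by linarith
  have hθ0 : (0:ℝ) ≤ 1/(2*(D+1)) := by positivity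
  have hθ1 : 1/(2*(D+1)) ≤ (1:ℝ) := by
    rw [div_le_one (by linarith)]; linarith
  set β : ℝ := (1 - 1/(2*(D+1))) * n with hβdef
  have hβ0 : 0 ≤ β := mul_nonneg (by linarith) (Nat.cast_nonneg n)
  apply sInf_le
  refine ⟨β, rfl, hβ0, (4*D)^n, by positivity, ?_⟩
  intro x R r hr hrR
  have hR0 : 0 < R := lt_trans hr hrR
  set x₀ : E := (x : E) with hx₀def
  -- the uniform cardinality bound for r-separated subsets of S ∩ B(x₀, R)
  have hbound : ∀ T : Finset E, ↑T ⊆ S → (∀ p ∈ T, dist p x₀ < R) →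
      (∀ p ∈ T, ∀ q ∈ T, p ≠ q → r ≤ dist p q) → (T.card : ℝ) ≤ (4*D)^n * (R/r)^β := by
    intro T hTS hTball hTsep
    rcases T.eq_empty_or_nonempty with rfl | hTne
    · simp only [Finset.card_empty, Nat.cast_zero]
      positivity
    have hneP : (T ×ˢ T).Nonempty := hTne.product hTne
    set Δ : ℝ := (T ×ˢ T).sup' hneP (fun pq => ρ pq.1 pq.2) with hΔdef
    set τ : ℝ := max Δ r with hτdef
    have hrτ : r ≤ τ := le_max_right _ _
    have hτ0 : 0 < τ := lt_of_lt_of_le hr hrτ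
    have hρτ : ∀ p ∈ T, ∀ q ∈ T, ρ p q ≤ τ := by
      intro p hp q hq
      refine le_trans ?_ (le_max_left _ _)
      exact Finset.le_sup' (f := fun pq : E × E => ρ pq.1 pq.2) (b := (p,q))
        (Finset.mem_product.mpr ⟨hp, hq⟩)
    have hτ2DR : τ ≤ 2*D*R := by
      apply max_le
      · apply Finset.sup'_le
        intro pq hpq
        obtain ⟨hm1, hm2⟩ := Finset.mem_product.mp hpq
        have hu := hup pq.1 (hTS hm1) pq.2 (hTS hm2)
        have hd : ‖pq.1 - pq.2‖ ≤ 2*R := by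
          rw [← dist_eq_norm]
          have h1 := hTball _ hm1
          have h2 := hTball _ hm2
          calc dist pq.1 pq.2 ≤ dist pq.1 x₀ + dist x₀ pq.2 := dist_triangle _ _ _
            _ ≤ R + R := by rw [dist_comm x₀ pq.2]; linarith
            _ = 2*R := by ring
        nlinarith
      · nlinarith
    have K := claimA μ S ρ D hD hultra hlow hup r hr T.card T le_rfl hTne hTS hTsep τ hrτ hρτ
    set ν : ℕ := finrank ℝ E with hνdef
    set ω₁ : ℝ≥0∞ := μ (ball (0:E) 1) with hω₁def
    have hω0 : ω₁ ≠ 0 := (measure_ball_pos μ 0 one_pos).ne'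
    have hωtop : ω₁ ≠ ⊤ := measure_ball_lt_top.ne
    obtain ⟨p₀, hp₀⟩ := hTne
    -- a measure upper bound for the union, by cases on whether τ ≤ R
    have hμU : μ (⋃ y ∈ T, ball (y:E) (τ/(2*D)))
        ≤ ENNReal.ofReal ((2 * min τ R)^ν) * ω₁ := by
      rcases le_or_gt τ R with hcase | hcase
      · have hsub : (⋃ y ∈ T, ball (y:E) (τ/(2*D))) ⊆ ball p₀ (τ + τ/(2*D)) := by
          intro z hz
          simp only [Set.mem_iUnion, mem_ball] at hz ⊢
          obtain ⟨y, hy, hzy⟩ := hz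
          have hyp : dist y p₀ ≤ τ := by
            rw [dist_eq_norm]
            exact le_trans (hlow y (hTS hy) p₀ (hTS hp₀)) (hρτ y hy p₀ hp₀)
          calc dist z p₀ ≤ dist z y + dist y p₀ := dist_triangle _ _ _
            _ < τ/(2*D) + τ := by linarith
            _ = τ + τ/(2*D) := by ring
        calc μ (⋃ y ∈ T, ball (y:E) (τ/(2*D))) ≤ μ (ball p₀ (τ + τ/(2*D))) := measure_mono hsub
          _ = ENNReal.ofReal ((τ + τ/(2*D))^ν) * ω₁ :=
              Measure.addHaar_ball_of_pos μ p₀ (by positivity)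
          _ ≤ ENNReal.ofReal ((2 * min τ R)^ν) * ω₁ := by
              apply mul_le_mul_left
              apply ENNReal.ofReal_le_ofReal
              apply pow_le_pow_left₀ (by positivity)
              have hd1 : τ/(2*D) ≤ τ := by
                apply div_le_self (le_of_lt hτ0); linarith
              rw [min_eq_left hcase]; linarith
      · have hsub : (⋃ y ∈ T, ball (y:E) (τ/(2*D))) ⊆ ball x₀ (R + τ/(2*D)) := by
          intro z hz
          simp only [Set.mem_iUnion, mem_ball] at hz ⊢
          obtain ⟨y, hy, hzy⟩ := hz
          have hyp : dist y x₀ < R := hTball _ hy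
          calc dist z x₀ ≤ dist z y + dist y x₀ := dist_triangle _ _ _
            _ < τ/(2*D) + R := by linarith
            _ = R + τ/(2*D) := by ring
        calc μ (⋃ y ∈ T, ball (y:E) (τ/(2*D))) ≤ μ (ball x₀ (R + τ/(2*D))) := measure_mono hsub
          _ = ENNReal.ofReal ((R + τ/(2*D))^ν) * ω₁ :=
              Measure.addHaar_ball_of_pos μ x₀ (by positivity)
          _ ≤ ENNReal.ofReal ((2 * min τ R)^ν) * ω₁ := by
              apply mul_le_mul_left
              apply ENNReal.ofReal_le_ofReal
              apply pow_le_pow_left₀ (by positivity)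
              have : τ/(2*D) ≤ R := by
                rw [div_le_iff₀ h2D]; nlinarith
              rw [min_eq_right (le_of_lt hcase)]; linarith
    -- extract the real inequality
    have hEN : ENNReal.ofReal ((T.card : ℝ) * ((r/(2*D))^ν * (τ/r) ^ ((1/(2*(D+1))) * (ν:ℝ)))) * ω₁
        ≤ ENNReal.ofReal ((2 * min τ R)^ν) * ω₁ := by
      refine le_trans (le_of_eq ?_) (le_trans K hμU)
      rw [ENNReal.ofReal_mul (Nat.cast_nonneg T.card), ENNReal.ofReal_mul (by positivity),
        ENNReal.ofReal_natCast]
      ring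
    have hreal : (T.card : ℝ) * ((r/(2*D))^ν * (τ/r) ^ ((1/(2*(D+1))) * (ν:ℝ)))
        ≤ (2 * min τ R)^ν := by
      have h1 := (ENNReal.mul_le_mul_iff_left hω0 hωtop).mp hEN
      exact (ENNReal.ofReal_le_ofReal_iff (by positivity)).mp h1
    -- conclude via helper_count, in two cases
    have hfinal : (T.card : ℝ) ≤ (4*D)^ν * (R/r) ^ ((1 - 1/(2*(D+1))) * (ν:ℝ)) := by
      rcases le_or_gt τ R with hcase | hcase
      · rw [min_eq_left hcase] at hreal
        have hq : 1 ≤ τ/r := (one_le_div hr).mpr hrτ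
        have hqr : 2*τ = 2*((τ/r)*r) := by field_simp
        rw [hqr] at hreal
        have h := helper_count (Nat.cast_nonneg T.card) hq hD hr hθ0 hreal
        refine le_trans h ?_
        apply mul_le_mul_of_nonneg_left _ (by positivity)
        apply Real.rpow_le_rpow (by positivity) ((div_le_div_iff_of_pos_right hr).mpr hcase)
          (by nlinarith [Nat.cast_nonneg (α := ℝ) ν])
      · rw [min_eq_right (le_of_lt hcase)] at hreal
        have hq : 1 ≤ R/r := (one_le_div hr).mpr (le_of_lt hrR)
        have hmono : (R/r) ^ ((1/(2*(D+1))) * (ν:ℝ)) ≤ (τ/r) ^ ((1/(2*(D+1))) * (ν:ℝ)) :=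
          Real.rpow_le_rpow (by positivity) ((div_le_div_iff_of_pos_right hr).mpr (le_of_lt hcase))
            (by positivity)
        have hreal2 : (T.card : ℝ) * ((r/(2*D))^ν * (R/r) ^ ((1/(2*(D+1))) * (ν:ℝ)))
            ≤ (2*R)^ν := by
          refine le_trans ?_ hreal
          apply mul_le_mul_of_nonneg_left _ (Nat.cast_nonneg T.card)
          exact mul_le_mul_of_nonneg_left hmono (by positivity)
        have hqr : 2*R = 2*((R/r)*r) := by field_simp
        rw [hqr] at hreal2
        exact helper_count (Nat.cast_nonneg T.card) hq hD hr hθ0 hreal2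
    have hνn : ν = n := hn
    rw [hνn] at hfinal
    rw [hβdef]
    convert hfinal using 3
  -- existence of a maximal separated set
  set 𝒜 : Finset E → Prop := fun T => ↑T ⊆ S ∧ (∀ p ∈ T, dist p x₀ < R) ∧
    (∀ p ∈ T, ∀ q ∈ T, p ≠ q → r ≤ dist p q) with h𝒜def
  set Kset : Set ℕ := {k | ∃ T : Finset E, 𝒜 T ∧ T.card = k} with hKdef
  have hK0 : (0:ℕ) ∈ Kset := ⟨∅, ⟨by simp, by simp, by simp⟩, rfl⟩
  have hKbdd : BddAbove Kset := by
    refine ⟨Nat.floor ((4*D)^n * (R/r)^β), ?_⟩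
    rintro k ⟨T, hT, rfl⟩
    exact Nat.le_floor (hbound T hT.1 hT.2.1 hT.2.2)
  obtain ⟨P, hP𝒜, hPcard⟩ : ∃ P : Finset E, 𝒜 P ∧ P.card = sSup Kset :=
    Nat.sSup_mem ⟨0, hK0⟩ hKbdd
  have hmax : ∀ y ∈ S, dist y x₀ < R → ∃ p ∈ P, dist y p < r := by
    intro y hyS hyR
    by_contra hcon
    push_neg at hcon
    have hyP : y ∉ P := by
      intro hyP
      have := hcon y hyP
      simp at this
      linarith
    have hins : 𝒜 (insert y P) := by
      refine ⟨?_, ?_, ?_⟩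
      · rw [Finset.coe_insert]
        exact Set.insert_subset hyS hP𝒜.1
      · intro p hp
        rcases Finset.mem_insert.mp hp with rfl | hp
        · exact hyR
        · exact hP𝒜.2.1 p hp
      · intro p hp q hq hpq
        rcases Finset.mem_insert.mp hp with hp1 | hp1
        · rcases Finset.mem_insert.mp hq with hq1 | hq1
          · exact absurd (hp1.trans hq1.symm) hpq
          · subst hp1
            exact hcon q hq1
        · rcases Finset.mem_insert.mp hq with hq1 | hq1
          · subst hq1
            rw [dist_comm]
            exact hcon p hp1
          · exact hP𝒜.2.2 p hp1 q hq1 hpq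
    have : (insert y P).card ∈ Kset := ⟨_, hins, rfl⟩
    have hle := le_csSup hKbdd this
    rw [Finset.card_insert_of_notMem hyP, hPcard] at hle
    omega
  -- build the covering finset in the subtype
  refine ⟨P.subtype (· ∈ S), ?_, ?_⟩
  · have hcard : (P.subtype (· ∈ S)).card = P.card := by
      rw [Finset.card_subtype, Finset.filter_true_of_mem (fun p hp => hP𝒜.1 hp)]
    rw [hcard]
    exact hbound P hP𝒜.1 hP𝒜.2.1 hP𝒜.2.2
  · intro y hy
    have hyR : dist (y:E) x₀ < R := by
      rw [← Subtype.dist_eq y x]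
      exact mem_ball.mp hy
    obtain ⟨p, hpP, hpy⟩ := hmax (y:E) y.2 hyR
    have hpS : p ∈ S := hP𝒜.1 hpP
    refine Set.mem_iUnion₂.mpr ⟨⟨p, hpS⟩, ?_, ?_⟩
    · simp [Finset.mem_subtype, hpP]
    · rw [mem_ball, Subtype.dist_eq]
      exact hpy
end
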